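/- arXiv:2504.19217 — 6 statements merged into one kernel-verified Lean document; each statement's English description precedes it below -/
import Mathlib

section
/- For a nonempty open set Ω ⊆ ℝ^m of finite Lebesgue measure, the heat content H_Ω(t) is a decreasing function of t on (0, ∞). -/
open MeasureTheory Real Set Filter

noncomputable def heatKernel (m : ℕ) (t : ℝ) (x y : EuclideanSpace ℝ (Fin m)) : ℝ :=
  (4 * π * t) ^ (-(m : ℝ) / 2) * Real.exp (-‖x - y‖ ^ 2 / (4 * t))

noncomputable def heatContent (m : ℕ) (Ω : Set (EuclideanSpace ℝ (Fin m))) (t : ℝ) : ℝ :=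
  ∫ x in Ω, ∫ y in Ω, heatKernel m t x y

open Complex FourierTransform RealInnerProductSpace

lemma gauss_rep (m : ℕ) (t : ℝ) (ht : 0 < t) (v : EuclideanSpace ℝ (Fin m)) :
    (((4*π*t) ^ (-(m:ℝ)/2) * Real.exp (-‖v‖^2/(4*t)) : ℝ) : ℂ)
      = ∫ ξ : EuclideanSpace ℝ (Fin m),
          Complex.exp (↑(-2*π*⟪ξ,v⟫) * Complex.I) * Complex.exp (-(4*π^2*t : ℝ) * ‖ξ‖^2) := by
  have hb0 : (0:ℝ) < 4*π^2*t := by positivity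
  have hb : (0:ℝ) < ((4*π^2*t : ℝ) : ℂ).re := by rw [Complex.ofReal_re]; exact hb0
  have h := fourier_gaussian_innerProductSpace (V := EuclideanSpace ℝ (Fin m))
    (b := ((4*π^2*t : ℝ) : ℂ)) hb v
  rw [Real.fourier_eq'] at h
  simp only [smul_eq_mul] at h
  rw [h, finrank_euclideanSpace_fin]
  have hπc : (π:ℂ) ≠ 0 := by exact_mod_cast Real.pi_ne_zero
  have htc : (t:ℂ) ≠ 0 := by exact_mod_cast ht.ne'
  have h4 : (0:ℝ) < 4*π*t := by positivity
  have e1 : ((π:ℂ)) / ((4*π^2*t : ℝ) : ℂ) = (((4*π*t)⁻¹ : ℝ) : ℂ) := by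
    push_cast
    field_simp [hπc, htc]
  have e2 : (-(π:ℂ)^2 * (‖v‖:ℂ)^2 / ((4*π^2*t : ℝ):ℂ)) = ((-‖v‖^2/(4*t) : ℝ) : ℂ) := by
    push_cast
    field_simp [hπc, htc]
  rw [e1, e2]
  have e3 : (((4*π*t)⁻¹ : ℝ) : ℂ) ^ ((m:ℂ)/2) = ((((4*π*t)⁻¹ : ℝ) ^ ((m:ℝ)/2) : ℝ) : ℂ) := by
    rw [Complex.ofReal_cpow (by positivity)]
    push_cast
    ring_nf
  rw [e3, ← Complex.ofReal_exp, ← Complex.ofReal_mul]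
  congr 1
  rw [neg_div, Real.rpow_neg h4.le, ← Real.inv_rpow h4.le]

lemma gauss_int (m : ℕ) (c : ℝ) (hc : 0 < c) :
    Integrable (fun ξ : EuclideanSpace ℝ (Fin m) => Real.exp (-c * ‖ξ‖^2)) := by
  have hb : (0:ℝ) < ((c : ℝ) : ℂ).re := by rw [Complex.ofReal_re]; exact hc
  have h := (GaussianFourier.integrable_cexp_neg_mul_sq_norm_add
    (V := EuclideanSpace ℝ (Fin m)) hb 0 0).norm
  apply h.congr
  filter_upwards with ξ
  rw [show (-(((c : ℝ)):ℂ) * (‖ξ‖:ℂ)^2 + 0 * ((⟪(0:EuclideanSpace ℝ (Fin m)),ξ⟫ : ℝ):ℂ))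
      = ((-c * ‖ξ‖^2 : ℝ) : ℂ) by push_cast; ring, Complex.norm_exp_ofReal]

lemma heatContent_rep (m : ℕ) (Ω : Set (EuclideanSpace ℝ (Fin m))) (hΩm : MeasurableSet Ω)
    (hvol : volume Ω < ⊤) (t : ℝ) (ht : 0 < t) :
    heatContent m Ω t = ∫ ξ : EuclideanSpace ℝ (Fin m),
      Complex.normSq (𝓕 (Ω.indicator fun _ => (1:ℂ)) ξ) * Real.exp (-(4*π^2*t) * ‖ξ‖^2) := by
  haveI hfin : IsFiniteMeasure (volume.restrict Ω) := ⟨by rwa [Measure.restrict_apply_univ]⟩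
  set μ := volume.restrict Ω with hμ
  have hb0 : (0:ℝ) < 4*π^2*t := by positivity
  have hb : (0:ℝ) < ((4*π^2*t : ℝ) : ℂ).re := by rw [Complex.ofReal_re]; exact hb0
  -- continuity of the heat kernel
  have hKcont : Continuous (fun z : (EuclideanSpace ℝ (Fin m)) × (EuclideanSpace ℝ (Fin m)) =>
      heatKernel m t z.1 z.2) := by
    unfold heatKernel
    fun_prop
  have hKint : Integrable (fun z : (EuclideanSpace ℝ (Fin m)) × (EuclideanSpace ℝ (Fin m)) =>
      heatKernel m t z.1 z.2) (μ.prod μ) := by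
    apply Integrable.mono' (integrable_const ((4*π*t) ^ (-(m:ℝ)/2)))
      hKcont.aestronglyMeasurable
    filter_upwards with z
    have h1 : (0:ℝ) < (4*π*t) ^ (-(m:ℝ)/2) := by positivity
    rw [Real.norm_eq_abs, _root_.abs_of_nonneg (by unfold heatKernel; positivity)]
    unfold heatKernel
    nth_rewrite 2 [← mul_one ((4*π*t) ^ (-(m:ℝ)/2))]
    apply mul_le_mul_of_nonneg_left _ h1.le
    apply Real.exp_le_one_iff.2
    rw [neg_div]
    have : (0:ℝ) ≤ ‖z.1 - z.2‖^2 / (4*t) := by positivity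
    linarith
  have hA : ((heatContent m Ω t : ℝ) : ℂ)
      = ∫ z, ((heatKernel m t z.1 z.2 : ℝ) : ℂ) ∂(μ.prod μ) := by
    rw [show (∫ z, ((heatKernel m t z.1 z.2 : ℝ) : ℂ) ∂(μ.prod μ))
        = ((∫ z, heatKernel m t z.1 z.2 ∂(μ.prod μ) : ℝ) : ℂ) from integral_ofReal]
    norm_cast
    exact integral_integral hKint
  have hB : ∀ z : EuclideanSpace ℝ (Fin m) × EuclideanSpace ℝ (Fin m),
      ((heatKernel m t z.1 z.2 : ℝ) : ℂ)
      = ∫ ξ : EuclideanSpace ℝ (Fin m),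
          Complex.exp (↑(-2*π*⟪ξ, z.1 - z.2⟫) * Complex.I)
            * Complex.exp (-(4*π^2*t : ℝ) * ‖ξ‖^2) := by
    intro z
    unfold heatKernel
    exact gauss_rep m t ht (z.1 - z.2)
  have hG : Integrable (fun ξ : EuclideanSpace ℝ (Fin m) => Real.exp (-(4*π^2*t) * ‖ξ‖^2)) :=
    gauss_int m _ hb0
  have hswapInt : Integrable (Function.uncurry fun
      (z : EuclideanSpace ℝ (Fin m) × EuclideanSpace ℝ (Fin m)) (ξ : EuclideanSpace ℝ (Fin m)) =>
      Complex.exp (↑(-2*π*⟪ξ, z.1 - z.2⟫) * Complex.I) * Complex.exp (-(4*π^2*t : ℝ) * ‖ξ‖^2))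
      ((μ.prod μ).prod volume) := by
    have hcont : Continuous (fun p :
        (EuclideanSpace ℝ (Fin m) × EuclideanSpace ℝ (Fin m)) × EuclideanSpace ℝ (Fin m) =>
        Complex.exp (↑(-2*π*⟪p.2, p.1.1 - p.1.2⟫) * Complex.I)
          * Complex.exp (-(4*π^2*t : ℝ) * ‖p.2‖^2)) := by
      have c1 : Continuous (fun p :
          (EuclideanSpace ℝ (Fin m) × EuclideanSpace ℝ (Fin m)) × EuclideanSpace ℝ (Fin m) =>
          (⟪p.2, p.1.1 - p.1.2⟫ : ℝ)) :=
        continuous_inner.comp (continuous_snd.prodMk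
          ((continuous_fst.comp continuous_fst).sub (continuous_snd.comp continuous_fst)))
      exact (Complex.continuous_exp.comp ((Complex.continuous_ofReal.comp
          (continuous_const.mul c1)).mul continuous_const)).mul
        (Complex.continuous_exp.comp (continuous_const.mul
          ((Complex.continuous_ofReal.comp (continuous_norm.comp continuous_snd)).pow 2)))
    apply Integrable.mono' ((integrable_const (1:ℝ)).mul_prod hG) hcont.aestronglyMeasurable
    filter_upwards with p
    rw [norm_mul, one_mul, Complex.norm_exp_ofReal_mul_I, one_mul,
      show (-(((4*π^2*t : ℝ)):ℂ) * (‖p.2‖:ℂ)^2) = ((-(4*π^2*t) * ‖p.2‖^2 : ℝ) : ℂ) by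
        push_cast; ring, Complex.norm_exp_ofReal]
  set F : EuclideanSpace ℝ (Fin m) → ℂ := 𝓕 (Ω.indicator fun _ => (1:ℂ)) with hF
  have hD : ∀ ξ : EuclideanSpace ℝ (Fin m),
      (∫ z, Complex.exp (↑(-2*π*⟪ξ, z.1 - z.2⟫) * Complex.I)
          * Complex.exp (-(4*π^2*t : ℝ) * ‖ξ‖^2) ∂(μ.prod μ))
      = ↑(Complex.normSq (F ξ)) * Complex.exp (-(4*π^2*t : ℝ) * ‖ξ‖^2) := by
    intro ξ
    rw [integral_mul_const]
    congr 1
    have hsplit : ∀ z : EuclideanSpace ℝ (Fin m) × EuclideanSpace ℝ (Fin m),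
        Complex.exp (↑(-2*π*⟪ξ, z.1 - z.2⟫) * Complex.I)
        = Complex.exp (↑(-2*π*⟪ξ, z.1⟫) * Complex.I)
            * Complex.exp (↑(2*π*⟪ξ, z.2⟫) * Complex.I) := by
      intro z
      rw [← Complex.exp_add, inner_sub_right]
      congr 1
      push_cast
      ring
    simp_rw [hsplit]
    have hpm := integral_prod_mul (μ := μ) (ν := μ)
      (fun x => Complex.exp (↑(-2*π*⟪ξ, x⟫) * Complex.I))
      (fun y => Complex.exp (↑(2*π*⟪ξ, y⟫) * Complex.I))
    rw [hpm]
    have hF1 : (∫ x, Complex.exp (↑(-2*π*⟪ξ, x⟫) * Complex.I) ∂μ) = F ξ := by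
      rw [hF, Real.fourier_eq', hμ, ← integral_indicator hΩm]
      congr 1
      ext x
      by_cases hx : x ∈ Ω <;> simp [hx, mul_comm, real_inner_comm]
    have hF2 : (∫ y, Complex.exp (↑(2*π*⟪ξ, y⟫) * Complex.I) ∂μ)
        = (starRingEnd ℂ) (F ξ) := by
      rw [← hF1, ← integral_conj]
      congr 1
      ext y
      rw [← Complex.exp_conj]
      congr 1
      simp only [map_mul, Complex.conj_I, Complex.conj_ofReal]
      push_cast
      ring
    rw [hF1, hF2, Complex.mul_conj]
  have key : ((heatContent m Ω t : ℝ) : ℂ)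
      = ((∫ ξ, Complex.normSq (F ξ) * Real.exp (-(4*π^2*t) * ‖ξ‖^2) : ℝ) : ℂ) := by
    rw [hA]
    calc (∫ z, ((heatKernel m t z.1 z.2 : ℝ) : ℂ) ∂(μ.prod μ))
        = ∫ z, (∫ ξ : EuclideanSpace ℝ (Fin m),
            Complex.exp (↑(-2*π*⟪ξ, z.1 - z.2⟫) * Complex.I)
              * Complex.exp (-(4*π^2*t : ℝ) * ‖ξ‖^2)) ∂(μ.prod μ) := by
          exact integral_congr_ae (Filter.Eventually.of_forall hB)
      _ = ∫ ξ : EuclideanSpace ℝ (Fin m), (∫ z,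
            Complex.exp (↑(-2*π*⟪ξ, z.1 - z.2⟫) * Complex.I)
              * Complex.exp (-(4*π^2*t : ℝ) * ‖ξ‖^2) ∂(μ.prod μ)) :=
          integral_integral_swap hswapInt
      _ = ∫ ξ : EuclideanSpace ℝ (Fin m),
            (↑(Complex.normSq (F ξ)) * Complex.exp (-(4*π^2*t : ℝ) * ‖ξ‖^2)) :=
          integral_congr_ae (Filter.Eventually.of_forall hD)
      _ = ∫ ξ : EuclideanSpace ℝ (Fin m),
            ((Complex.normSq (F ξ) * Real.exp (-(4*π^2*t) * ‖ξ‖^2) : ℝ) : ℂ) := by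
          apply integral_congr_ae (Filter.Eventually.of_forall ?_)
          intro ξ
          push_cast [Complex.ofReal_exp]
          ring
      _ = ((∫ ξ, Complex.normSq (F ξ) * Real.exp (-(4*π^2*t) * ‖ξ‖^2) : ℝ) : ℂ) :=
          integral_ofReal
  exact_mod_cast key


theorem stmt_3 (m : ℕ) (hm : 1 ≤ m) (Ω : Set (EuclideanSpace ℝ (Fin m)))
    (hne : Ω.Nonempty) (hopen : IsOpen Ω) (hvol : volume Ω < ⊤) :
    AntitoneOn (heatContent m Ω) (Set.Ioi 0) := by
  intro s hs t ht hst
  have hΩm := hopen.measurableSet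
  rw [heatContent_rep m Ω hΩm hvol s (mem_Ioi.mp hs),
    heatContent_rep m Ω hΩm hvol t (mem_Ioi.mp ht)]
  set F : EuclideanSpace ℝ (Fin m) → ℂ := 𝓕 (Ω.indicator fun _ => (1:ℂ)) with hF
  have hind : Integrable (Ω.indicator fun _ => (1:ℂ)) volume :=
    (integrable_indicator_iff hΩm).2 (integrableOn_const hvol.ne)
  have hFcont : Continuous F :=
    VectorFourier.fourierIntegral_continuous Real.continuous_fourierChar
      (by exact continuous_inner) hind
  have hFb : ∀ ξ, ‖F ξ‖ ≤ (volume Ω).toReal := by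
    intro ξ
    refine le_trans (VectorFourier.norm_fourierIntegral_le_integral_norm _ _ _ _ _) ?_
    have : (fun x => ‖Ω.indicator (fun _ => (1:ℂ)) x‖)
        = fun x => Ω.indicator (fun _ => (1:ℝ)) x := by
      ext x
      by_cases hx : x ∈ Ω <;> simp [hx]
    rw [this, integral_indicator_const _ hΩm, smul_eq_mul, mul_one, measureReal_def]
  have hbdd : ∀ ξ, ‖(Complex.normSq (F ξ) : ℝ)‖ ≤ ((volume Ω).toReal)^2 := by
    intro ξ
    rw [Real.norm_eq_abs, _root_.abs_of_nonneg (Complex.normSq_nonneg _),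
      Complex.normSq_eq_norm_sq]
    exact pow_le_pow_left₀ (norm_nonneg _) (hFb ξ) 2
  have hInt : ∀ τ : ℝ, 0 < τ → Integrable (fun ξ : EuclideanSpace ℝ (Fin m) =>
      Complex.normSq (F ξ) * Real.exp (-(4*π^2*τ) * ‖ξ‖^2)) volume := by
    intro τ hτ
    refine Integrable.bdd_mul (c := ((volume Ω).toReal)^2) (gauss_int m _ (by positivity))
      ((Complex.continuous_normSq.comp hFcont).aestronglyMeasurable) ?_
    exact Filter.Eventually.of_forall hbdd
  refine integral_mono (hInt t (mem_Ioi.mp ht)) (hInt s (mem_Ioi.mp hs)) ?_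
  intro ξ
  have h1 : 4*π^2*s ≤ 4*π^2*t := by nlinarith [Real.pi_pos]
  refine mul_le_mul_of_nonneg_left (Real.exp_le_exp.2 ?_) (Complex.normSq_nonneg _)
  exact mul_le_mul_of_nonneg_right (neg_le_neg h1) (sq_nonneg _)
end

section
/- For a nonempty open set Ω ⊆ ℝ^m of finite Lebesgue measure, the heat content H_Ω(t) is a convex function of t on (0, ∞). -/
set_option maxHeartbeats 1000000

open MeasureTheory Real Set Filter

namespace HeatAux

open Complex FourierTransform RealInnerProductSpace

/-- The character `x ↦ exp(-2πi⟪ξ,x⟫)`. -/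
noncomputable def ee (m : ℕ) (ξ x : EuclideanSpace ℝ (Fin m)) : ℂ :=
  Complex.exp (((-2 * π * ⟪ξ, x⟫ : ℝ) : ℂ) * Complex.I)

/-- The Fourier transform of the indicator of `Ω`. -/
noncomputable def FF (m : ℕ) (Ω : Set (EuclideanSpace ℝ (Fin m)))
    (ξ : EuclideanSpace ℝ (Fin m)) : ℂ :=
  ∫ x in Ω, ee m ξ x

lemma norm_ee (m : ℕ) (ξ x : EuclideanSpace ℝ (Fin m)) : ‖ee m ξ x‖ = 1 := by
  rw [ee, Complex.norm_exp]
  simp [Complex.mul_re]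

lemma continuous_ee (m : ℕ) :
    Continuous fun p : EuclideanSpace ℝ (Fin m) × EuclideanSpace ℝ (Fin m) => ee m p.1 p.2 := by
  unfold ee
  apply Complex.continuous_exp.comp
  apply Continuous.mul _ continuous_const
  apply Complex.continuous_ofReal.comp
  first
  | exact continuous_const.mul continuous_inner
  | exact (continuous_const.mul continuous_inner).neg
  | continuity

lemma sm_FF (m : ℕ) (Ω : Set (EuclideanSpace ℝ (Fin m))) : StronglyMeasurable (FF m Ω) := by
  have h : StronglyMeasurable fun p :
      EuclideanSpace ℝ (Fin m) × EuclideanSpace ℝ (Fin m) => ee m p.1 p.2 :=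
    (continuous_ee m).stronglyMeasurable
  exact h.integral_prod_right'

lemma norm_FF_le (m : ℕ) (Ω : Set (EuclideanSpace ℝ (Fin m))) (hvol : volume Ω < ⊤)
    (ξ : EuclideanSpace ℝ (Fin m)) : ‖FF m Ω ξ‖ ≤ (volume Ω).toReal := by
  haveI : IsFiniteMeasure (volume.restrict Ω) :=
    ⟨by rwa [Measure.restrict_apply_univ]⟩
  have h := norm_integral_le_of_norm_le_const (μ := volume.restrict Ω)
    (f := fun x => ee m ξ x) (C := 1) (Eventually.of_forall fun x => (norm_ee m ξ x).le)
  simpa [Measure.restrict_apply_univ, measureReal_def, FF] using h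

lemma integrable_gaussC (m : ℕ) {c : ℝ} (hc : 0 < c) :
    Integrable fun ξ : EuclideanSpace ℝ (Fin m) =>
      Complex.exp (-(c : ℂ) * (‖ξ‖ : ℂ) ^ 2) := by
  have h := GaussianFourier.integrable_cexp_neg_mul_sq_norm_add
    (V := EuclideanSpace ℝ (Fin m)) (b := (c : ℂ)) (by rwa [Complex.ofReal_re]) 0 0
  simpa using h

lemma integrable_gaussR (m : ℕ) {c : ℝ} (hc : 0 < c) :
    Integrable fun ξ : EuclideanSpace ℝ (Fin m) => rexp (-(c * ‖ξ‖ ^ 2)) := by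
  have h := (integrable_gaussC m hc).norm
  refine h.congr (Eventually.of_forall fun ξ => ?_)
  show ‖Complex.exp (-(c : ℂ) * (‖ξ‖ : ℂ) ^ 2)‖ = rexp (-(c * ‖ξ‖ ^ 2))
  rw [show -(c : ℂ) * (‖ξ‖ : ℂ) ^ 2 = ((-(c * ‖ξ‖ ^ 2) : ℝ) : ℂ) by push_cast; ring,
    ← Complex.ofReal_exp, Complex.norm_real, Real.norm_eq_abs, Real.abs_exp]

lemma ee_sub (m : ℕ) (ξ x y : EuclideanSpace ℝ (Fin m)) :
    ee m ξ (x - y) = ee m ξ x * (starRingEnd ℂ) (ee m ξ y) := by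
  rw [ee, ee, ee, ← Complex.exp_conj, ← Complex.exp_add]
  congr 1
  simp only [map_mul, Complex.conj_ofReal, Complex.conj_I]
  rw [inner_sub_right]
  push_cast
  ring

/-- The heat kernel as an inverse Fourier integral of a Gaussian. -/
lemma kernel_eq (m : ℕ) {t : ℝ} (ht : 0 < t) (x y : EuclideanSpace ℝ (Fin m)) :
    (heatKernel m t x y : ℂ) =
      ∫ ξ, ee m ξ (x - y) * ((rexp (-(4 * π ^ 2 * t * ‖ξ‖ ^ 2)) : ℝ) : ℂ) := by
  have hπ : (π : ℝ) ≠ 0 := Real.pi_ne_zero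
  have ht' : t ≠ 0 := ht.ne'
  have hπC : (π : ℂ) ≠ 0 := Complex.ofReal_ne_zero.2 hπ
  have htC : (t : ℂ) ≠ 0 := Complex.ofReal_ne_zero.2 ht'
  have h := fourier_gaussian_innerProductSpace (V := EuclideanSpace ℝ (Fin m))
    (b := ((4 * π ^ 2 * t : ℝ) : ℂ)) (by rw [Complex.ofReal_re]; positivity) (x - y)
  rw [fourier_eq'] at h
  simp only [smul_eq_mul, finrank_euclideanSpace_fin] at h
  have hi : ∀ v : EuclideanSpace ℝ (Fin m),
      Complex.exp (((-2 * π * ⟪v, x - y⟫ : ℝ) : ℂ) * Complex.I) *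
        Complex.exp (-((4 * π ^ 2 * t : ℝ) : ℂ) * (‖v‖ : ℂ) ^ 2)
      = ee m v (x - y) * ((rexp (-(4 * π ^ 2 * t * ‖v‖ ^ 2)) : ℝ) : ℂ) := by
    intro v
    rw [ee]
    congr 1
    rw [Complex.ofReal_exp]
    congr 1
    push_cast
    ring
  simp only [hi] at h
  rw [h]
  rw [show ((m : ℂ) / 2) = (((m : ℝ) / 2 : ℝ) : ℂ) by push_cast; ring]
  rw [show ((π : ℂ) / ((4 * π ^ 2 * t : ℝ) : ℂ)) = ((1 / (4 * π * t) : ℝ) : ℂ) by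
    push_cast; field_simp]
  rw [← Complex.ofReal_cpow (by positivity) ((m : ℝ) / 2)]
  rw [show (-(π : ℂ) ^ 2 * (‖x - y‖ : ℂ) ^ 2 / ((4 * π ^ 2 * t : ℝ) : ℂ))
      = ((-‖x - y‖ ^ 2 / (4 * t) : ℝ) : ℂ) by push_cast; field_simp]
  rw [← Complex.ofReal_exp, ← Complex.ofReal_mul]
  refine Complex.ofReal_inj.mpr ?_
  rw [heatKernel]
  congr 1
  rw [one_div, Real.inv_rpow (by positivity), ← Real.rpow_neg (by positivity), neg_div]

/-- Fourier representation of the heat content. -/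
lemma rep (m : ℕ) (Ω : Set (EuclideanSpace ℝ (Fin m))) (hvol : volume Ω < ⊤)
    {t : ℝ} (ht : 0 < t) :
    heatContent m Ω t = ∫ ξ : EuclideanSpace ℝ (Fin m),
      ‖FF m Ω ξ‖ ^ 2 * rexp (-(4 * π ^ 2 * t * ‖ξ‖ ^ 2)) := by
  classical
  haveI : IsFiniteMeasure (volume.restrict Ω) :=
    ⟨by rwa [Measure.restrict_apply_univ]⟩
  have hc : (0 : ℝ) < 4 * π ^ 2 * t := by positivity
  have hGR : Integrable fun ξ : EuclideanSpace ℝ (Fin m) =>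
      rexp (-(4 * π ^ 2 * t * ‖ξ‖ ^ 2)) := integrable_gaussR m hc
  -- inner double integral
  have inner_eq : ∀ x : EuclideanSpace ℝ (Fin m),
      (∫ y in Ω, (heatKernel m t x y : ℂ)) =
        ∫ ξ, (ee m ξ x * ((rexp (-(4 * π ^ 2 * t * ‖ξ‖ ^ 2)) : ℝ) : ℂ)) *
          (starRingEnd ℂ) (FF m Ω ξ) := by
    intro x
    have step1 : (∫ y in Ω, (heatKernel m t x y : ℂ)) =
        ∫ y in Ω, ∫ ξ, ee m ξ (x - y) *
          ((rexp (-(4 * π ^ 2 * t * ‖ξ‖ ^ 2)) : ℝ) : ℂ) := by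
      refine integral_congr_ae (Eventually.of_forall fun y => ?_)
      simp only []
      rw [kernel_eq m ht x y]
    rw [step1]
    have hint : Integrable (Function.uncurry fun y ξ =>
        ee m ξ (x - y) * ((rexp (-(4 * π ^ 2 * t * ‖ξ‖ ^ 2)) : ℝ) : ℂ))
        ((volume.restrict Ω).prod volume) := by
      have hdom : Integrable (fun p : EuclideanSpace ℝ (Fin m) × EuclideanSpace ℝ (Fin m) =>
          (1 : ℝ) * rexp (-(4 * π ^ 2 * t * ‖p.2‖ ^ 2)))
          ((volume.restrict Ω).prod volume) :=
        (integrable_const (1 : ℝ)).mul_prod hGR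
      refine Integrable.mono' hdom ?_ ?_
      · apply Continuous.aestronglyMeasurable
        show Continuous fun p : EuclideanSpace ℝ (Fin m) × EuclideanSpace ℝ (Fin m) =>
          ee m p.2 (x - p.1) * ((rexp (-(4 * π ^ 2 * t * ‖p.2‖ ^ 2)) : ℝ) : ℂ)
        apply Continuous.mul
        · unfold ee
          apply Complex.continuous_exp.comp
          apply Continuous.mul _ continuous_const
          apply Complex.continuous_ofReal.comp
          exact continuous_const.mul
            (Continuous.inner continuous_snd (continuous_const.sub continuous_fst))
        · exact Complex.continuous_ofReal.comp (Real.continuous_exp.comp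
            ((continuous_const.mul (continuous_snd.norm.pow 2)).neg))
      · refine Eventually.of_forall fun p => ?_
        rcases p with ⟨y, ξ⟩
        simp only [Function.uncurry_apply_pair, norm_mul, norm_ee,
          one_mul, Complex.norm_real, Real.norm_eq_abs, Real.abs_exp]
        exact le_rfl
    rw [integral_integral_swap hint]
    refine integral_congr_ae (Eventually.of_forall fun ξ => ?_)
    simp only []
    have hfe : (fun y => ee m ξ (x - y) *
        ((rexp (-(4 * π ^ 2 * t * ‖ξ‖ ^ 2)) : ℝ) : ℂ))
        = fun y => (ee m ξ x * ((rexp (-(4 * π ^ 2 * t * ‖ξ‖ ^ 2)) : ℝ) : ℂ)) *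
          (starRingEnd ℂ) (ee m ξ y) :=
      funext fun y => by rw [ee_sub]; ring
    rw [hfe, MeasureTheory.integral_const_mul, integral_conj]
    rfl
  -- full double integral as complex number
  have hC2 : (heatContent m Ω t : ℂ) =
      ∫ x in Ω, ∫ ξ, (ee m ξ x * ((rexp (-(4 * π ^ 2 * t * ‖ξ‖ ^ 2)) : ℝ) : ℂ)) *
        (starRingEnd ℂ) (FF m Ω ξ) := by
    rw [heatContent]
    refine Eq.trans integral_ofReal.symm (integral_congr_ae (Eventually.of_forall fun x => ?_))
    simp only []
    exact Eq.trans integral_ofReal.symm (inner_eq x)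
  -- swap the outer two integrals
  have hint2 : Integrable (Function.uncurry fun x ξ =>
      (ee m ξ x * ((rexp (-(4 * π ^ 2 * t * ‖ξ‖ ^ 2)) : ℝ) : ℂ)) *
        (starRingEnd ℂ) (FF m Ω ξ))
      ((volume.restrict Ω).prod volume) := by
    have hdom : Integrable (fun p : EuclideanSpace ℝ (Fin m) × EuclideanSpace ℝ (Fin m) =>
        (1 : ℝ) * (rexp (-(4 * π ^ 2 * t * ‖p.2‖ ^ 2)) * (volume Ω).toReal))
        ((volume.restrict Ω).prod volume) :=
      (integrable_const (1 : ℝ)).mul_prod (hGR.mul_const _)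
    refine Integrable.mono' hdom ?_ ?_
    · have c1 : Continuous fun p : EuclideanSpace ℝ (Fin m) × EuclideanSpace ℝ (Fin m) =>
          ee m p.2 p.1 * ((rexp (-(4 * π ^ 2 * t * ‖p.2‖ ^ 2)) : ℝ) : ℂ) := by
        apply Continuous.mul
        · unfold ee
          apply Complex.continuous_exp.comp
          apply Continuous.mul _ continuous_const
          apply Complex.continuous_ofReal.comp
          exact continuous_const.mul (Continuous.inner continuous_snd continuous_fst)
        · exact Complex.continuous_ofReal.comp (Real.continuous_exp.comp
            ((continuous_const.mul (continuous_snd.norm.pow 2)).neg))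
      have m1 : StronglyMeasurable fun ξ : EuclideanSpace ℝ (Fin m) =>
          (starRingEnd ℂ) (FF m Ω ξ) :=
        RCLike.continuous_conj.comp_stronglyMeasurable (sm_FF m Ω)
      have m2 : StronglyMeasurable fun p :
          EuclideanSpace ℝ (Fin m) × EuclideanSpace ℝ (Fin m) =>
          (starRingEnd ℂ) (FF m Ω p.2) :=
        m1.comp_measurable measurable_snd
      exact c1.aestronglyMeasurable.mul m2.aestronglyMeasurable
    · refine Eventually.of_forall fun p => ?_
      rcases p with ⟨x, ξ⟩
      simp only [Function.uncurry_apply_pair, norm_mul, norm_ee, RCLike.norm_conj,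
        one_mul, Complex.norm_real, Real.norm_eq_abs, Real.abs_exp]
      exact mul_le_mul_of_nonneg_left (norm_FF_le m Ω hvol ξ) (Real.exp_nonneg _)
  have hC3 : (heatContent m Ω t : ℂ) =
      ∫ ξ, (FF m Ω ξ * (starRingEnd ℂ) (FF m Ω ξ)) *
        ((rexp (-(4 * π ^ 2 * t * ‖ξ‖ ^ 2)) : ℝ) : ℂ) := by
    rw [hC2, integral_integral_swap hint2]
    refine integral_congr_ae (Eventually.of_forall fun ξ => ?_)
    simp only []
    have hfe : (fun x => (ee m ξ x * ((rexp (-(4 * π ^ 2 * t * ‖ξ‖ ^ 2)) : ℝ) : ℂ)) *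
        (starRingEnd ℂ) (FF m Ω ξ))
        = fun x => (((rexp (-(4 * π ^ 2 * t * ‖ξ‖ ^ 2)) : ℝ) : ℂ) *
          (starRingEnd ℂ) (FF m Ω ξ)) * ee m ξ x :=
      funext fun x => by ring
    rw [hfe, MeasureTheory.integral_const_mul]
    rw [show (∫ x in Ω, ee m ξ x) = FF m Ω ξ from rfl]
    ring
  have point : ∀ ξ : EuclideanSpace ℝ (Fin m),
      (FF m Ω ξ * (starRingEnd ℂ) (FF m Ω ξ)) *
          ((rexp (-(4 * π ^ 2 * t * ‖ξ‖ ^ 2)) : ℝ) : ℂ)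
        = ((‖FF m Ω ξ‖ ^ 2 * rexp (-(4 * π ^ 2 * t * ‖ξ‖ ^ 2)) : ℝ) : ℂ) := by
    intro ξ
    rw [Complex.mul_conj, ← Complex.ofReal_mul]
    congr 1
    rw [Complex.normSq_eq_norm_sq]
  have hC4 : (heatContent m Ω t : ℂ) =
      ((∫ ξ : EuclideanSpace ℝ (Fin m),
        ‖FF m Ω ξ‖ ^ 2 * rexp (-(4 * π ^ 2 * t * ‖ξ‖ ^ 2)) : ℝ) : ℂ) := by
    rw [hC3]
    exact Eq.trans (integral_congr_ae (Eventually.of_forall point)) integral_ofReal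
  exact_mod_cast hC4

lemma integrable_w (m : ℕ) (Ω : Set (EuclideanSpace ℝ (Fin m))) (hvol : volume Ω < ⊤)
    {c : ℝ} (hc : 0 < c) :
    Integrable fun ξ : EuclideanSpace ℝ (Fin m) =>
      ‖FF m Ω ξ‖ ^ 2 * rexp (-(c * ‖ξ‖ ^ 2)) := by
  refine Integrable.mono' ((integrable_gaussR m hc).const_mul ((volume Ω).toReal ^ 2)) ?_ ?_
  · exact ((((sm_FF m Ω).measurable.norm.pow_const 2).mul
      (Real.continuous_exp.comp
        ((continuous_const.mul (continuous_norm.pow 2)).neg)).measurable)).aestronglyMeasurable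
  · refine Eventually.of_forall fun ξ => ?_
    have h1 : (0 : ℝ) ≤ ‖FF m Ω ξ‖ ^ 2 * rexp (-(c * ‖ξ‖ ^ 2)) := by positivity
    rw [Real.norm_eq_abs, _root_.abs_of_nonneg h1]
    exact mul_le_mul_of_nonneg_right
      (pow_le_pow_left₀ (norm_nonneg _) (norm_FF_le m Ω hvol ξ) 2) (Real.exp_nonneg _)

end HeatAux

theorem stmt_4 (m : ℕ) (hm : 1 ≤ m) (Ω : Set (EuclideanSpace ℝ (Fin m)))
    (hne : Ω.Nonempty) (hopen : IsOpen Ω) (hvol : volume Ω < ⊤) :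
    ConvexOn ℝ (Set.Ioi 0) (heatContent m Ω) := by
  refine ⟨convex_Ioi 0, ?_⟩
  intro t ht s hs a b ha hb hab
  simp only [smul_eq_mul]
  have ht' : (0 : ℝ) < t := ht
  have hs' : (0 : ℝ) < s := hs
  have hmix : (0 : ℝ) < a * t + b * s := by
    rcases eq_or_lt_of_le ha with h | h
    · have hb1 : b = 1 := by linarith
      rw [← h, hb1]; simpa using hs'
    · nlinarith
  have hπ2t : (0 : ℝ) < 4 * π ^ 2 * t := by positivity
  have hπ2s : (0 : ℝ) < 4 * π ^ 2 * s := by positivity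
  have hπ2m : (0 : ℝ) < 4 * π ^ 2 * (a * t + b * s) := by positivity
  rw [HeatAux.rep m Ω hvol ht', HeatAux.rep m Ω hvol hs', HeatAux.rep m Ω hvol hmix]
  have key : ∀ ξ : EuclideanSpace ℝ (Fin m),
      ‖HeatAux.FF m Ω ξ‖ ^ 2 * rexp (-(4 * π ^ 2 * (a * t + b * s) * ‖ξ‖ ^ 2))
        ≤ a * (‖HeatAux.FF m Ω ξ‖ ^ 2 * rexp (-(4 * π ^ 2 * t * ‖ξ‖ ^ 2)))
          + b * (‖HeatAux.FF m Ω ξ‖ ^ 2 * rexp (-(4 * π ^ 2 * s * ‖ξ‖ ^ 2))) := by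
    intro ξ
    have hexp := convexOn_exp.2 (mem_univ (-(4 * π ^ 2 * t * ‖ξ‖ ^ 2)))
      (mem_univ (-(4 * π ^ 2 * s * ‖ξ‖ ^ 2))) ha hb hab
    simp only [smul_eq_mul] at hexp
    have harg : -(4 * π ^ 2 * (a * t + b * s) * ‖ξ‖ ^ 2)
        = a * -(4 * π ^ 2 * t * ‖ξ‖ ^ 2) + b * -(4 * π ^ 2 * s * ‖ξ‖ ^ 2) := by ring
    calc ‖HeatAux.FF m Ω ξ‖ ^ 2 * rexp (-(4 * π ^ 2 * (a * t + b * s) * ‖ξ‖ ^ 2))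
        ≤ ‖HeatAux.FF m Ω ξ‖ ^ 2 * (a * rexp (-(4 * π ^ 2 * t * ‖ξ‖ ^ 2))
            + b * rexp (-(4 * π ^ 2 * s * ‖ξ‖ ^ 2))) := by
          rw [harg]
          exact mul_le_mul_of_nonneg_left hexp (by positivity)
      _ = a * (‖HeatAux.FF m Ω ξ‖ ^ 2 * rexp (-(4 * π ^ 2 * t * ‖ξ‖ ^ 2)))
          + b * (‖HeatAux.FF m Ω ξ‖ ^ 2 * rexp (-(4 * π ^ 2 * s * ‖ξ‖ ^ 2))) := by ring
  have hw_t := HeatAux.integrable_w m Ω hvol hπ2t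
  have hw_s := HeatAux.integrable_w m Ω hvol hπ2s
  have hw_m := HeatAux.integrable_w m Ω hvol hπ2m
  calc (∫ ξ : EuclideanSpace ℝ (Fin m),
        ‖HeatAux.FF m Ω ξ‖ ^ 2 * rexp (-(4 * π ^ 2 * (a * t + b * s) * ‖ξ‖ ^ 2)))
      ≤ ∫ ξ : EuclideanSpace ℝ (Fin m),
        (a * (‖HeatAux.FF m Ω ξ‖ ^ 2 * rexp (-(4 * π ^ 2 * t * ‖ξ‖ ^ 2)))
          + b * (‖HeatAux.FF m Ω ξ‖ ^ 2 * rexp (-(4 * π ^ 2 * s * ‖ξ‖ ^ 2)))) :=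
        integral_mono hw_m ((hw_t.const_mul a).add (hw_s.const_mul b)) key
    _ = a * (∫ ξ : EuclideanSpace ℝ (Fin m),
          ‖HeatAux.FF m Ω ξ‖ ^ 2 * rexp (-(4 * π ^ 2 * t * ‖ξ‖ ^ 2)))
        + b * (∫ ξ : EuclideanSpace ℝ (Fin m),
          ‖HeatAux.FF m Ω ξ‖ ^ 2 * rexp (-(4 * π ^ 2 * s * ‖ξ‖ ^ 2))) := by
        rw [integral_add (hw_t.const_mul a) (hw_s.const_mul b),
          MeasureTheory.integral_const_mul, MeasureTheory.integral_const_mul]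
end

section
/- Let Ω ⊆ ℝ^m be a nonempty open set with diam(Ω) < ∞. Then for all t ≥ (diam(Ω))², the heat content satisfies (d/dt) H_Ω(t) ≤ -((2m-1)/4)·H_Ω(t)/t. -/
open MeasureTheory Real Set Filter

lemma hk_cont (m : ℕ) (t : ℝ) :
    Continuous (fun z : EuclideanSpace ℝ (Fin m) × EuclideanSpace ℝ (Fin m) =>
      heatKernel m t z.1 z.2) := by
  unfold heatKernel; fun_prop

lemma hk_nonneg (m : ℕ) {t : ℝ} (ht : 0 < t) (x y : EuclideanSpace ℝ (Fin m)) :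
    0 ≤ heatKernel m t x y :=
  mul_nonneg (Real.rpow_nonneg (by positivity) _) (Real.exp_nonneg _)

lemma hk_le (m : ℕ) {t : ℝ} (ht : 0 < t) (x y : EuclideanSpace ℝ (Fin m)) :
    heatKernel m t x y ≤ (4 * π * t) ^ (-(m : ℝ) / 2) := by
  unfold heatKernel
  have h1 : Real.exp (-‖x - y‖ ^ 2 / (4 * t)) ≤ 1 := by
    rw [Real.exp_le_one_iff, neg_div]
    have : (0:ℝ) ≤ ‖x - y‖ ^ 2 / (4 * t) := by positivity
    linarith
  calc (4 * π * t) ^ (-(m : ℝ) / 2) * Real.exp (-‖x - y‖ ^ 2 / (4 * t))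
      ≤ (4 * π * t) ^ (-(m : ℝ) / 2) * 1 :=
        mul_le_mul_of_nonneg_left h1 (Real.rpow_nonneg (by positivity) _)
    _ = _ := mul_one _

lemma hk_intOn (m : ℕ) {Ω : Set (EuclideanSpace ℝ (Fin m))} (hbd : Bornology.IsBounded Ω)
    {t : ℝ} (ht : 0 < t) :
    IntegrableOn (fun z : EuclideanSpace ℝ (Fin m) × EuclideanSpace ℝ (Fin m) =>
      heatKernel m t z.1 z.2) (Ω ×ˢ Ω) := by
  have hμ : volume (Ω ×ˢ Ω) < ⊤ := (hbd.prod hbd).measure_lt_top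
  refine Integrable.mono' (g := fun _ => (4 * π * t) ^ (-(m : ℝ) / 2))
    (integrableOn_const hμ.ne) ((hk_cont m t).aestronglyMeasurable.restrict) ?_
  filter_upwards with z
  rw [Real.norm_eq_abs, abs_of_nonneg (hk_nonneg m ht _ _)]
  exact hk_le m ht _ _

lemma hc_eq (m : ℕ) {Ω : Set (EuclideanSpace ℝ (Fin m))} (hbd : Bornology.IsBounded Ω)
    {t : ℝ} (ht : 0 < t) :
    heatContent m Ω t = ∫ z in Ω ×ˢ Ω, heatKernel m t z.1 z.2 := by
  rw [heatContent]
  rw [show (volume : Measure (EuclideanSpace ℝ (Fin m) × EuclideanSpace ℝ (Fin m))).restrict (Ω ×ˢ Ω)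
      = ((volume : Measure (EuclideanSpace ℝ (Fin m))).restrict Ω).prod (volume.restrict Ω) by
    rw [Measure.prod_restrict, ← Measure.volume_eq_prod]]
  rw [MeasureTheory.integral_integral]
  rw [Measure.prod_restrict, ← Measure.volume_eq_prod]
  exact hk_intOn m hbd ht

lemma hk_hasDerivAt (m : ℕ) (x y : EuclideanSpace ℝ (Fin m)) {t : ℝ} (ht : 0 < t) :
    HasDerivAt (fun s => heatKernel m s x y)
      (heatKernel m t x y * (-(m : ℝ) / 2 / t + ‖x - y‖ ^ 2 / (4 * t ^ 2))) t := by
  have h4πt : (0:ℝ) < 4 * π * t := by positivity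
  have h1 : HasDerivAt (fun s : ℝ => 4 * π * s) (4 * π) t := by
    simpa using (hasDerivAt_id t).const_mul (4 * π)
  have h2 := h1.rpow_const (p := -(m : ℝ) / 2) (Or.inl h4πt.ne')
  have h3 : HasDerivAt (fun s : ℝ => -‖x - y‖ ^ 2 / (4 * s)) (‖x - y‖ ^ 2 / (4 * t ^ 2)) t := by
    have h := (hasDerivAt_inv ht.ne').const_mul (-‖x - y‖ ^ 2 / 4)
    have hfun : (fun s : ℝ => -‖x - y‖ ^ 2 / (4 * s)) = fun s => -‖x - y‖ ^ 2 / 4 * s⁻¹ := by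
      funext s; ring
    rw [hfun]
    convert h using 1
    case e'_4 => rfl
    case e'_5 => rfl
    ring
  have h5 := h2.mul h3.exp
  convert h5 using 1
  case e'_4 => rfl
  case e'_5 => rfl
  case e'_8 => rfl
  unfold heatKernel
  rw [Real.rpow_sub_one h4πt.ne']
  field_simp

theorem stmt_5 (m : ℕ) (hm : 1 ≤ m) (Ω : Set (EuclideanSpace ℝ (Fin m)))
    (hne : Ω.Nonempty) (hopen : IsOpen Ω) (hbd : Bornology.IsBounded Ω)
    (t : ℝ) (ht : (Metric.diam Ω) ^ 2 ≤ t) :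
    deriv (heatContent m Ω) t ≤
      -((2 * (m : ℝ) - 1) / 4) * heatContent m Ω t / t := by
  -- t > 0
  obtain ⟨x₀, hx₀⟩ := hne
  obtain ⟨r, hr, hball⟩ := Metric.isOpen_iff.1 hopen x₀ hx₀
  set v : EuclideanSpace ℝ (Fin m) := EuclideanSpace.single (⟨0, hm⟩ : Fin m) (r / 2) with hv
  have hnv : ‖v‖ = r / 2 := by
    rw [hv, EuclideanSpace.norm_single, Real.norm_eq_abs, abs_of_pos (by linarith)]
  have hy : x₀ + v ∈ Ω := by
    apply hball
    rw [Metric.mem_ball, dist_self_add_left, hnv]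
    linarith
  have hd : 0 < Metric.diam Ω := by
    have h1 := Metric.dist_le_diam_of_mem hbd hx₀ hy
    rw [dist_self_add_right, hnv] at h1
    linarith
  have ht0 : 0 < t := lt_of_lt_of_le (pow_pos hd 2) ht
  have hs : MeasurableSet (Ω ×ˢ Ω) := (hopen.prod hopen).measurableSet
  set μ := (volume : Measure (EuclideanSpace ℝ (Fin m) × EuclideanSpace ℝ (Fin m))).restrict
    (Ω ×ˢ Ω) with hμdef
  set D := Metric.diam Ω with hD
  have key := hasDerivAt_integral_of_dominated_loc_of_deriv_le (μ := μ) (x₀ := t) (s := Metric.ball t (t / 2))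
    (F := fun s (z : EuclideanSpace ℝ (Fin m) × EuclideanSpace ℝ (Fin m)) =>
      heatKernel m s z.1 z.2)
    (F' := fun s (z : EuclideanSpace ℝ (Fin m) × EuclideanSpace ℝ (Fin m)) =>
      heatKernel m s z.1 z.2 * (-(m : ℝ) / 2 / s + ‖z.1 - z.2‖ ^ 2 / (4 * s ^ 2)))
    (bound := fun _ => (2 * π * t) ^ (-(m : ℝ) / 2) * ((m : ℝ) / t + D ^ 2 / t ^ 2))
    (Metric.ball_mem_nhds t (half_pos ht0))
    (Eventually.of_forall fun s => (hk_cont m s).aestronglyMeasurable.restrict)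
    (hk_intOn m hbd ht0)
    (((hk_cont m t).mul (by fun_prop)).aestronglyMeasurable.restrict)
    ?_ (integrableOn_const ((hbd.prod hbd).measure_lt_top.ne))
    ?_
  rotate_left
  · -- bound
    filter_upwards [ae_restrict_mem hs] with z hz
    intro s hsb
    rw [Metric.mem_ball, Real.dist_eq, abs_sub_lt_iff] at hsb
    have hs1 : t / 2 < s := by linarith [hsb.1, hsb.2]
    have hs0 : 0 < s := by linarith
    have hc : ‖z.1 - z.2‖ ^ 2 ≤ D ^ 2 := by
      apply pow_le_pow_left₀ (norm_nonneg _) _ 2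
      rw [← dist_eq_norm]
      exact Metric.dist_le_diam_of_mem hbd hz.1 hz.2
    have hc0 : (0:ℝ) ≤ ‖z.1 - z.2‖ ^ 2 := by positivity
    have hkb : heatKernel m s z.1 z.2 ≤ (2 * π * t) ^ (-(m : ℝ) / 2) := by
      refine (hk_le m hs0 _ _).trans ?_
      apply Real.rpow_le_rpow_of_nonpos (by positivity)
      · nlinarith [Real.pi_pos]
      · have : (0:ℝ) ≤ (m : ℝ) := Nat.cast_nonneg m
        linarith
    have hwb : |(-(m : ℝ) / 2 / s + ‖z.1 - z.2‖ ^ 2 / (4 * s ^ 2))| ≤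
        (m : ℝ) / t + D ^ 2 / t ^ 2 := by
      have hA : |(-(m : ℝ) / 2 / s)| ≤ (m : ℝ) / t := by
        have hmn : (0:ℝ) ≤ (m : ℝ) := Nat.cast_nonneg m
        rw [show (-(m : ℝ) / 2 / s) = -((m : ℝ) / 2 / s) by ring, abs_neg,
          abs_of_nonneg (by positivity)]
        rw [div_le_div_iff₀ (by positivity) ht0]
        nlinarith [mul_nonneg hmn (show (0:ℝ) ≤ s - t / 2 by linarith)]
      have hB : |‖z.1 - z.2‖ ^ 2 / (4 * s ^ 2)| ≤ D ^ 2 / t ^ 2 := by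
        rw [abs_of_nonneg (by positivity)]
        apply div_le_div₀ (by positivity) hc (by positivity)
        nlinarith
      calc |(-(m : ℝ) / 2 / s + ‖z.1 - z.2‖ ^ 2 / (4 * s ^ 2))|
          ≤ |(-(m : ℝ) / 2 / s)| + |‖z.1 - z.2‖ ^ 2 / (4 * s ^ 2)| := abs_add_le _ _
        _ ≤ (m : ℝ) / t + D ^ 2 / t ^ 2 := add_le_add hA hB
    rw [Real.norm_eq_abs, abs_mul, abs_of_nonneg (hk_nonneg m hs0 _ _)]
    exact mul_le_mul hkb hwb (abs_nonneg _) (Real.rpow_nonneg (by positivity) _)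
  · -- differentiability
    filter_upwards with z
    intro s hsb
    rw [Metric.mem_ball, Real.dist_eq, abs_sub_lt_iff] at hsb
    have hs0 : 0 < s := by linarith [hsb.1, hsb.2]
    exact hk_hasDerivAt m z.1 z.2 hs0
  obtain ⟨hint', hder⟩ := key
  -- transfer deriv to heatContent
  have heq : (fun s => ∫ z, heatKernel m s z.1 z.2 ∂μ) =ᶠ[nhds t] heatContent m Ω := by
    filter_upwards [eventually_gt_nhds ht0] with s hs0
    exact (hc_eq m hbd hs0).symm
  have hder' : HasDerivAt (heatContent m Ω)
      (∫ z, heatKernel m t z.1 z.2 *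
        (-(m : ℝ) / 2 / t + ‖z.1 - z.2‖ ^ 2 / (4 * t ^ 2)) ∂μ) t :=
    hder.congr_of_eventuallyEq heq.symm
  rw [hder'.deriv, hc_eq m hbd ht0]
  have hrhs : -((2 * (m : ℝ) - 1) / 4) * (∫ z, heatKernel m t z.1 z.2 ∂μ) / t =
      ∫ z, (-((2 * (m : ℝ) - 1) / 4) / t) * heatKernel m t z.1 z.2 ∂μ := by
    rw [integral_const_mul]; ring
  rw [hrhs]
  apply integral_mono_ae hint' ((hk_intOn m hbd ht0).const_mul _)
  filter_upwards [ae_restrict_mem hs] with z hz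
  have hc : ‖z.1 - z.2‖ ^ 2 ≤ t := by
    refine le_trans ?_ ht
    apply pow_le_pow_left₀ (norm_nonneg _) _ 2
    rw [← dist_eq_norm]
    exact Metric.dist_le_diam_of_mem hbd hz.1 hz.2
  have hF0 : 0 ≤ heatKernel m t z.1 z.2 := hk_nonneg m ht0 _ _
  have hw : -(m : ℝ) / 2 / t + ‖z.1 - z.2‖ ^ 2 / (4 * t ^ 2) ≤
      -((2 * (m : ℝ) - 1) / 4) / t := by
    have h1 : ‖z.1 - z.2‖ ^ 2 / (4 * t ^ 2) ≤ 1 / (4 * t) := by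
      rw [div_le_div_iff₀ (by positivity) (by positivity)]
      nlinarith
    have h2 : -(m : ℝ) / 2 / t + 1 / (4 * t) = -((2 * (m : ℝ) - 1) / 4) / t := by
      field_simp; ring
    linarith
  calc heatKernel m t z.1 z.2 * (-(m : ℝ) / 2 / t + ‖z.1 - z.2‖ ^ 2 / (4 * t ^ 2))
      ≤ heatKernel m t z.1 z.2 * (-((2 * (m : ℝ) - 1) / 4) / t) :=
        mul_le_mul_of_nonneg_left hw hF0
    _ = (-((2 * (m : ℝ) - 1) / 4) / t) * heatKernel m t z.1 z.2 := mul_comm _ _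
end

section
/- For a nonempty open bounded set Ω ⊆ ℝ^m, the third derivative of the heat content satisfies H_Ω'''(t) ≤ 0 for all t > 0; equivalently, H_Ω'' is decreasing on (0, ∞). -/
open MeasureTheory Real Set Filter

namespace Stmt13Aux

open Complex FourierTransform RealInnerProductSpace Metric Bornology

/-- The Fourier transform of the indicator of `Ω`, written as a set integral. -/
noncomputable def cFun (m : ℕ) (Ω : Set (EuclideanSpace ℝ (Fin m)))
    (ξ : EuclideanSpace ℝ (Fin m)) : ℂ :=
  ∫ x in Ω, Complex.exp (↑(-(2 * π * ⟪ξ, x⟫)) * Complex.I)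

/-- The `k`-th moment integral appearing as (up to sign) the `k`-th derivative of the
heat content. -/
noncomputable def Jfun (m : ℕ) (Ω : Set (EuclideanSpace ℝ (Fin m))) (k : ℕ) (t : ℝ) : ℝ :=
  ∫ ξ : EuclideanSpace ℝ (Fin m), Complex.normSq (cFun m Ω ξ) *
    ((4 * π ^ 2 * ‖ξ‖ ^ 2) ^ k * Real.exp (-(4 * π ^ 2 * t) * ‖ξ‖ ^ 2))

variable {m : ℕ} {Ω : Set (EuclideanSpace ℝ (Fin m))}

lemma continuous_cexp_real {α : Type*} [TopologicalSpace α] {θ : α → ℝ} (hθ : Continuous θ) :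
    Continuous fun x => Complex.exp (↑(θ x) * Complex.I) :=
  Complex.continuous_exp.comp ((Complex.continuous_ofReal.comp hθ).mul continuous_const)

lemma finiteRestrict (hbd : IsBounded Ω) : IsFiniteMeasure (volume.restrict Ω) :=
  ⟨by rw [Measure.restrict_apply_univ]; exact hbd.measure_lt_top⟩

lemma cgauss_integrable {a : ℝ} (ha : 0 < a) :
    Integrable (fun ξ : EuclideanSpace ℝ (Fin m) => Complex.exp (-(a : ℂ) * (‖ξ‖ : ℂ) ^ 2)) := by
  have h := GaussianFourier.integrable_cexp_neg_mul_sq_norm_add (V := EuclideanSpace ℝ (Fin m))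
    (b := (a : ℂ)) (by simpa using ha) 0 0
  simpa using h

lemma gauss_integrable {a : ℝ} (ha : 0 < a) :
    Integrable (fun ξ : EuclideanSpace ℝ (Fin m) => Real.exp (-a * ‖ξ‖ ^ 2)) := by
  refine (cgauss_integrable (m := m) ha).norm.congr (Eventually.of_forall fun ξ => ?_)
  show ‖Complex.exp (-(a : ℂ) * (‖ξ‖ : ℂ) ^ 2)‖ = Real.exp (-a * ‖ξ‖ ^ 2)
  rw [show -(a : ℂ) * (‖ξ‖ : ℂ) ^ 2 = ((-a * ‖ξ‖ ^ 2 : ℝ) : ℂ) by push_cast; ring,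
    Complex.norm_exp, Complex.ofReal_re]

lemma poly_gauss_integrable {a : ℝ} (ha : 0 < a) (k : ℕ) :
    Integrable (fun ξ : EuclideanSpace ℝ (Fin m) =>
      (4 * π ^ 2 * ‖ξ‖ ^ 2) ^ k * Real.exp (-a * ‖ξ‖ ^ 2)) := by
  have hπ := Real.pi_pos
  have hfac : (0:ℝ) < (Nat.factorial k : ℝ) := by positivity
  refine ((gauss_integrable (m := m) (show (0:ℝ) < a/2 by positivity)).const_mul
    ((4 * π ^ 2) ^ k * ((Nat.factorial k : ℝ) * (2/a) ^ k))).mono'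
    (Continuous.aestronglyMeasurable (by fun_prop)) (Eventually.of_forall fun ξ => ?_)
  rw [Real.norm_eq_abs, _root_.abs_of_nonneg (by positivity)]
  set u : ℝ := ‖ξ‖ ^ 2 with hu
  have hu0 : 0 ≤ u := by positivity
  have h1 : ((a/2) * u) ^ k / (Nat.factorial k : ℝ) ≤ Real.exp ((a/2) * u) :=
    Real.pow_div_factorial_le_exp _ (by positivity) k
  have h2 : u ^ k ≤ (Nat.factorial k : ℝ) * (2/a) ^ k * Real.exp ((a/2) * u) := by
    have hrw : u ^ k = (((a/2) * u) ^ k / (Nat.factorial k : ℝ)) *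
        ((Nat.factorial k : ℝ) * (2/a) ^ k) := by
      rw [mul_pow]
      have ha0 : a ≠ 0 := ha.ne'
      field_simp
      rw [mul_assoc, ← mul_pow, div_mul_div_comm, mul_comm a 2, div_self (by positivity), one_pow,
        mul_one]
    rw [hrw]
    calc (((a/2) * u) ^ k / (Nat.factorial k : ℝ)) * ((Nat.factorial k : ℝ) * (2/a) ^ k)
        ≤ Real.exp ((a/2) * u) * ((Nat.factorial k : ℝ) * (2/a) ^ k) := by
          apply mul_le_mul_of_nonneg_right h1 (by positivity)
      _ = (Nat.factorial k : ℝ) * (2/a) ^ k * Real.exp ((a/2) * u) := by ring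
  calc (4 * π ^ 2 * u) ^ k * Real.exp (-a * u)
      = (4 * π ^ 2) ^ k * (u ^ k * Real.exp (-a * u)) := by rw [mul_pow]; ring
    _ ≤ (4 * π ^ 2) ^ k * (((Nat.factorial k : ℝ) * (2/a) ^ k * Real.exp ((a/2) * u)) *
          Real.exp (-a * u)) := by
        apply mul_le_mul_of_nonneg_left _ (by positivity)
        exact mul_le_mul_of_nonneg_right h2 (Real.exp_pos _).le
    _ = (4 * π ^ 2) ^ k * ((Nat.factorial k : ℝ) * (2/a) ^ k) * Real.exp (-(a/2) * u) := by
        rw [mul_assoc ((Nat.factorial k : ℝ) * (2/a) ^ k), ← Real.exp_add]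
        ring_nf
    _ = (4 * π ^ 2) ^ k * ((Nat.factorial k : ℝ) * (2/a) ^ k) * Real.exp (-(a/2) * ‖ξ‖ ^ 2) := by
        rw [hu]

lemma cFun_continuous (hbd : IsBounded Ω) : Continuous (cFun m Ω) := by
  haveI := finiteRestrict (m := m) hbd
  apply continuous_of_dominated (bound := fun _ => (1:ℝ))
  · refine fun ξ => Continuous.aestronglyMeasurable (continuous_cexp_real ?_)
    exact (continuous_const.mul (Continuous.inner continuous_const continuous_id)).neg
  · intro ξ
    refine Eventually.of_forall fun x => ?_
    simp [Complex.norm_exp]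
  · exact integrable_const 1
  · refine Eventually.of_forall fun x => continuous_cexp_real ?_
    exact (continuous_const.mul (Continuous.inner continuous_id continuous_const)).neg

lemma cFun_norm_le (hbd : IsBounded Ω) (ξ : EuclideanSpace ℝ (Fin m)) :
    ‖cFun m Ω ξ‖ ≤ (volume Ω).toReal := by
  calc ‖cFun m Ω ξ‖ ≤ ∫ x in Ω, ‖Complex.exp (↑(-(2 * π * ⟪ξ, x⟫)) * Complex.I)‖ :=
        norm_integral_le_integral_norm _
    _ = ∫ _x in Ω, (1:ℝ) := by
        refine integral_congr_ae (Eventually.of_forall fun x => ?_)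
        simp [Complex.norm_exp]
    _ ≤ (volume Ω).toReal := by simp; exact le_rfl

lemma J_integrand_integrable (hbd : IsBounded Ω) (k : ℕ) {t : ℝ} (ht : 0 < t) :
    Integrable (fun ξ : EuclideanSpace ℝ (Fin m) => Complex.normSq (cFun m Ω ξ) *
      ((4 * π ^ 2 * ‖ξ‖ ^ 2) ^ k * Real.exp (-(4 * π ^ 2 * t) * ‖ξ‖ ^ 2))) := by
  have hπ := Real.pi_pos
  have hb : (0:ℝ) < 4 * π ^ 2 * t := by positivity
  have hnsq : ∀ ξ : EuclideanSpace ℝ (Fin m),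
      Complex.normSq (cFun m Ω ξ) ≤ (volume Ω).toReal ^ 2 := by
    intro ξ
    rw [Complex.normSq_eq_norm_sq]
    exact pow_le_pow_left₀ (norm_nonneg _) (cFun_norm_le hbd ξ) 2
  refine ((poly_gauss_integrable (m := m) hb k).const_mul ((volume Ω).toReal ^ 2)).mono'
    ?_ (Eventually.of_forall fun ξ => ?_)
  · exact ((Complex.continuous_normSq.comp (cFun_continuous hbd)).mul
      (by fun_prop)).aestronglyMeasurable
  · rw [Real.norm_eq_abs, _root_.abs_of_nonneg (by
      have := Complex.normSq_nonneg (cFun m Ω ξ); positivity)]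
    have hX : (0:ℝ) ≤ (4 * π ^ 2 * ‖ξ‖ ^ 2) ^ k * Real.exp (-(4 * π ^ 2 * t) * ‖ξ‖ ^ 2) := by
      positivity
    calc Complex.normSq (cFun m Ω ξ) *
          ((4 * π ^ 2 * ‖ξ‖ ^ 2) ^ k * Real.exp (-(4 * π ^ 2 * t) * ‖ξ‖ ^ 2))
        ≤ (volume Ω).toReal ^ 2 *
          ((4 * π ^ 2 * ‖ξ‖ ^ 2) ^ k * Real.exp (-(4 * π ^ 2 * t) * ‖ξ‖ ^ 2)) :=
          mul_le_mul_of_nonneg_right (hnsq ξ) hX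
      _ = _ := by ring

lemma J_nonneg (k : ℕ) (t : ℝ) : 0 ≤ Jfun m Ω k t := by
  refine integral_nonneg fun ξ => ?_
  have := Complex.normSq_nonneg (cFun m Ω ξ)
  have hπ := Real.pi_pos
  positivity

lemma J_hasDerivAt (hbd : IsBounded Ω) (k : ℕ) {t : ℝ} (ht : 0 < t) :
    HasDerivAt (Jfun m Ω k) (-(Jfun m Ω (k + 1) t)) t := by
  have hπ := Real.pi_pos
  set F : ℝ → EuclideanSpace ℝ (Fin m) → ℝ := fun s ξ => Complex.normSq (cFun m Ω ξ) *
    ((4 * π ^ 2 * ‖ξ‖ ^ 2) ^ k * Real.exp (-(4 * π ^ 2 * s) * ‖ξ‖ ^ 2)) with hF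
  set F' : ℝ → EuclideanSpace ℝ (Fin m) → ℝ := fun s ξ => -(Complex.normSq (cFun m Ω ξ) *
    ((4 * π ^ 2 * ‖ξ‖ ^ 2) ^ (k + 1) * Real.exp (-(4 * π ^ 2 * s) * ‖ξ‖ ^ 2))) with hF'
  have hmain := hasDerivAt_integral_of_dominated_loc_of_deriv_le (μ := volume)
    (F := F) (F' := F') (x₀ := t)
    (bound := fun ξ => Complex.normSq (cFun m Ω ξ) *
      ((4 * π ^ 2 * ‖ξ‖ ^ 2) ^ (k + 1) * Real.exp (-(4 * π ^ 2 * (t/2)) * ‖ξ‖ ^ 2)))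
    (Metric.ball_mem_nhds t (half_pos ht))
    (Eventually.of_forall fun s =>
      ((Complex.continuous_normSq.comp (cFun_continuous hbd)).mul
        (by fun_prop)).aestronglyMeasurable)
    (J_integrand_integrable hbd k ht)
    ((J_integrand_integrable hbd (k + 1) ht).neg.aestronglyMeasurable)
    (Eventually.of_forall fun ξ => fun s hs => ?_)
    (J_integrand_integrable hbd (k + 1) (half_pos ht))
    (Eventually.of_forall fun ξ => fun s _hs => ?_)
  · have h2 : (∫ ξ, F' t ξ) = -(Jfun m Ω (k + 1) t) := by
      rw [hF']
      exact integral_neg _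
    rw [h2] at hmain
    exact hmain.2
  · -- the bound
    have hs2 : t/2 ≤ s := by
      rw [Metric.mem_ball, Real.dist_eq] at hs
      have := abs_lt.mp hs
      linarith [this.1]
    have hu : (0:ℝ) ≤ ‖ξ‖ ^ 2 := sq_nonneg _
    rw [hF']
    simp only
    rw [Real.norm_eq_abs, abs_neg, _root_.abs_of_nonneg (by
      have := Complex.normSq_nonneg (cFun m Ω ξ); positivity)]
    apply mul_le_mul_of_nonneg_left _ (Complex.normSq_nonneg _)
    apply mul_le_mul_of_nonneg_left _ (by positivity)
    apply Real.exp_le_exp.mpr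
    nlinarith [mul_le_mul_of_nonneg_right
      (show 4 * π ^ 2 * (t/2) ≤ 4 * π ^ 2 * s by nlinarith) hu]
  · -- differentiability in s
    have hlin : HasDerivAt (fun s : ℝ => -(4 * π ^ 2 * s) * ‖ξ‖ ^ 2)
        (-(4 * π ^ 2) * ‖ξ‖ ^ 2) s := by
      have h0 : HasDerivAt (fun s : ℝ => (-(4 * π ^ 2) * ‖ξ‖ ^ 2) * s)
          ((-(4 * π ^ 2) * ‖ξ‖ ^ 2) * 1) s := (hasDerivAt_id s).const_mul _
      rw [mul_one] at h0
      have heq : (fun s : ℝ => (-(4 * π ^ 2) * ‖ξ‖ ^ 2) * s)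
          = fun s : ℝ => -(4 * π ^ 2 * s) * ‖ξ‖ ^ 2 := by funext r; ring
      rw [heq] at h0
      exact h0
    have h3 := HasDerivAt.const_mul (Complex.normSq (cFun m Ω ξ))
      (HasDerivAt.const_mul ((4 * π ^ 2 * ‖ξ‖ ^ 2) ^ k) hlin.exp)
    convert h3 using 1
    · rfl
    simp only [hF', pow_succ]
    ring

lemma key (hmeas : MeasurableSet Ω) (hbd : IsBounded Ω) {t : ℝ} (ht : 0 < t) :
    heatContent m Ω t = Jfun m Ω 0 t := by
  haveI := finiteRestrict (m := m) hbd
  have hπ := Real.pi_pos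
  set b : ℝ := 4 * π ^ 2 * t with hbdef
  have hb : 0 < b := by positivity
  set G : EuclideanSpace ℝ (Fin m) → ℂ := fun ξ => Complex.exp (-(b : ℂ) * (‖ξ‖ : ℂ) ^ 2)
    with hG
  have hGint : Integrable G := cgauss_integrable hb
  -- Step A : Fourier representation of the heat kernel
  have hk : ∀ z : EuclideanSpace ℝ (Fin m),
      (4 * π * t) ^ (-(m : ℝ) / 2) * Real.exp (-‖z‖ ^ 2 / (4 * t))
        = (∫ ξ : EuclideanSpace ℝ (Fin m),
            Complex.exp (↑(-2 * π * ⟪ξ, z⟫) * Complex.I) * G ξ).re := by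
    intro z
    have hb' : 0 < ((b : ℂ)).re := by simpa using hb
    have h1 := fourier_gaussian_innerProductSpace (b := (b : ℂ)) hb' z
    rw [Real.fourier_eq'] at h1
    simp only [smul_eq_mul] at h1
    rw [hG]
    simp only
    rw [h1]
    have hfr : Module.finrank ℝ (EuclideanSpace ℝ (Fin m)) = m := finrank_euclideanSpace_fin
    rw [hfr]
    have e1 : ((π : ℂ) / (b : ℂ)) = (((4 * π * t)⁻¹ : ℝ) : ℂ) := by
      rw [hbdef]
      push_cast
      have : (π : ℂ) ≠ 0 := Complex.ofReal_ne_zero.mpr Real.pi_ne_zero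
      have ht' : (t : ℂ) ≠ 0 := Complex.ofReal_ne_zero.mpr ht.ne'
      field_simp
    have e2 : ((m : ℂ) / 2) = (((m : ℝ) / 2 : ℝ) : ℂ) := by push_cast; ring
    have e3 : (-(π : ℂ) ^ 2 * (‖z‖ : ℂ) ^ 2 / (b : ℂ)) = ((-‖z‖ ^ 2 / (4 * t) : ℝ) : ℂ) := by
      rw [hbdef]
      push_cast
      have : (π : ℂ) ≠ 0 := Complex.ofReal_ne_zero.mpr Real.pi_ne_zero
      have ht' : (t : ℂ) ≠ 0 := Complex.ofReal_ne_zero.mpr ht.ne'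
      field_simp
    rw [e1, e2, e3, ← Complex.ofReal_cpow (by positivity), ← Complex.ofReal_exp,
      ← Complex.ofReal_mul, Complex.ofReal_re]
    congr 1
    rw [Real.inv_rpow (by positivity : (0:ℝ) ≤ 4 * π * t), ← Real.rpow_neg (by positivity),
      neg_div]
  -- Step B : the chain of Fubini manipulations
  set ρ := volume.restrict Ω with hρ
  set E : (EuclideanSpace ℝ (Fin m) × EuclideanSpace ℝ (Fin m)) →
      EuclideanSpace ℝ (Fin m) → ℂ :=
    fun p ξ => Complex.exp (↑(-2 * π * ⟪ξ, p.1 - p.2⟫) * Complex.I) * G ξ with hE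
  have hGnorm : ∀ ξ : EuclideanSpace ℝ (Fin m), ‖G ξ‖ = Real.exp (-b * ‖ξ‖ ^ 2) := by
    intro ξ
    rw [hG]
    simp only
    rw [show -(b : ℂ) * (‖ξ‖ : ℂ) ^ 2 = ((-b * ‖ξ‖ ^ 2 : ℝ) : ℂ) by push_cast; ring,
      Complex.norm_exp, Complex.ofReal_re]
  have hEnorm : ∀ p ξ, ‖E p ξ‖ = Real.exp (-b * ‖ξ‖ ^ 2) := by
    intro p ξ
    rw [hE]
    simp only
    rw [norm_mul, Complex.norm_exp_ofReal_mul_I, one_mul]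
    exact hGnorm ξ
  have hGc : Continuous G := by
    rw [hG]
    exact Complex.continuous_exp.comp
      (continuous_const.mul ((Complex.continuous_ofReal.comp continuous_norm).pow 2))
  have hcontHK : Continuous fun p : EuclideanSpace ℝ (Fin m) × EuclideanSpace ℝ (Fin m) =>
      heatKernel m t p.1 p.2 := by
    unfold heatKernel
    fun_prop
  have hHKbd : Integrable (Function.uncurry fun x y => heatKernel m t x y) (ρ.prod ρ) := by
    refine Integrable.mono' (integrable_const ((4 * π * t) ^ (-(m : ℝ) / 2)))
      hcontHK.aestronglyMeasurable (Eventually.of_forall fun p => ?_)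
    have hexp : Real.exp (-‖p.1 - p.2‖ ^ 2 / (4 * t)) ≤ 1 := by
      rw [Real.exp_le_one_iff]
      exact div_nonpos_of_nonpos_of_nonneg (neg_nonpos.mpr (by positivity)) (by positivity)
    show ‖heatKernel m t p.1 p.2‖ ≤ _
    unfold heatKernel
    rw [Real.norm_eq_abs, _root_.abs_of_nonneg (by positivity)]
    calc (4 * π * t) ^ (-(m : ℝ) / 2) * Real.exp (-‖p.1 - p.2‖ ^ 2 / (4 * t))
        ≤ (4 * π * t) ^ (-(m : ℝ) / 2) * 1 := mul_le_mul_of_nonneg_left hexp (by positivity)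
      _ = (4 * π * t) ^ (-(m : ℝ) / 2) := mul_one _
  have hEc : Continuous fun q :
      (EuclideanSpace ℝ (Fin m) × EuclideanSpace ℝ (Fin m)) × EuclideanSpace ℝ (Fin m) =>
      E q.1 q.2 := by
    simp only [hE]
    refine Continuous.mul (continuous_cexp_real ?_) (hGc.comp continuous_snd)
    exact continuous_const.mul
      (Continuous.inner continuous_snd ((continuous_fst.fst).sub (continuous_fst.snd)))
  have hWc : Continuous fun p : EuclideanSpace ℝ (Fin m) × EuclideanSpace ℝ (Fin m) =>
      ∫ ξ, E p ξ := by
    have h𝓕 : (fun p : EuclideanSpace ℝ (Fin m) × EuclideanSpace ℝ (Fin m) => ∫ ξ, E p ξ)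
        = fun p => 𝓕 G (p.1 - p.2) := by
      funext p
      rw [Real.fourier_eq']
      simp only [smul_eq_mul, hE]
    rw [h𝓕]
    exact (VectorFourier.fourierIntegral_continuous (L := innerₗ _) Real.continuous_fourierChar
      (by exact continuous_inner) hGint).comp (continuous_fst.sub continuous_snd)
  have hWint : Integrable (fun p => ∫ ξ, E p ξ) (ρ.prod ρ) := by
    refine Integrable.mono' (integrable_const (∫ ξ : EuclideanSpace ℝ (Fin m), Real.exp (-b * ‖ξ‖ ^ 2)))
      hWc.aestronglyMeasurable (Eventually.of_forall fun p => ?_)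
    calc ‖∫ ξ, E p ξ‖ ≤ ∫ ξ, ‖E p ξ‖ := norm_integral_le_integral_norm _
      _ = ∫ ξ, Real.exp (-b * ‖ξ‖ ^ 2) :=
          integral_congr_ae (Eventually.of_forall fun ξ => hEnorm p ξ)
  have hEunc : Integrable (Function.uncurry E) ((ρ.prod ρ).prod volume) := by
    refine Integrable.mono' ((integrable_const (1 : ℝ)).mul_prod (gauss_integrable hb))
      hEc.aestronglyMeasurable (Eventually.of_forall fun q => ?_)
    have hq : ‖Function.uncurry E q‖ = Real.exp (-b * ‖q.2‖ ^ 2) := hEnorm q.1 q.2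
    rw [hq, one_mul]
  have inner_eq : ∀ ξ, (∫ p, E p ξ ∂(ρ.prod ρ))
      = (cFun m Ω ξ * (starRingEnd ℂ) (cFun m Ω ξ)) * G ξ := by
    intro ξ
    have hsplit : (fun p : EuclideanSpace ℝ (Fin m) × EuclideanSpace ℝ (Fin m) => E p ξ)
        = fun p => (Complex.exp (↑(-(2 * π * ⟪ξ, p.1⟫)) * Complex.I)) *
            ((fun y => Complex.exp (↑(2 * π * ⟪ξ, y⟫) * Complex.I) * G ξ) p.2) := by
      funext p
      simp only [hE]
      rw [← mul_assoc]
      congr 1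
      rw [← Complex.exp_add]
      congr 1
      rw [inner_sub_right]
      push_cast
      ring
    have h2 : (∫ p, E p ξ ∂(ρ.prod ρ))
        = (∫ x, Complex.exp (↑(-(2 * π * ⟪ξ, x⟫)) * Complex.I) ∂ρ) *
          (∫ y, Complex.exp (↑(2 * π * ⟪ξ, y⟫) * Complex.I) * G ξ ∂ρ) := by
      rw [hsplit]
      exact integral_prod_mul (μ := ρ) (ν := ρ)
        (f := fun x => Complex.exp (↑(-(2 * π * ⟪ξ, x⟫)) * Complex.I))
        (g := fun y => Complex.exp (↑(2 * π * ⟪ξ, y⟫) * Complex.I) * G ξ)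
    rw [h2]
    have hBconj : (∫ y, Complex.exp (↑(2 * π * ⟪ξ, y⟫) * Complex.I) * G ξ ∂ρ)
        = (starRingEnd ℂ) (cFun m Ω ξ) * G ξ := by
      rw [integral_mul_const]
      congr 1
      have hc : ∀ y, Complex.exp (↑(2 * π * ⟪ξ, y⟫) * Complex.I)
          = (starRingEnd ℂ) (Complex.exp (↑(-(2 * π * ⟪ξ, y⟫)) * Complex.I)) := by
        intro y
        rw [← Complex.exp_conj, map_mul, Complex.conj_I, Complex.conj_ofReal]
        congr 1
        push_cast
        ring
      rw [integral_congr_ae (Eventually.of_forall hc), integral_conj]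
      rfl
    rw [hBconj]
    rw [← mul_assoc]
    rfl
  have hfinal : ∀ ξ, (cFun m Ω ξ * (starRingEnd ℂ) (cFun m Ω ξ)) * G ξ
      = ((Complex.normSq (cFun m Ω ξ) * Real.exp (-b * ‖ξ‖ ^ 2) : ℝ) : ℂ) := by
    intro ξ
    rw [Complex.mul_conj, hG]
    simp only
    rw [show -(b : ℂ) * (‖ξ‖ : ℂ) ^ 2 = ((-b * ‖ξ‖ ^ 2 : ℝ) : ℂ) by push_cast; ring,
      ← Complex.ofReal_exp, ← Complex.ofReal_mul]
  calc heatContent m Ω t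
      = ∫ x in Ω, ∫ y in Ω, heatKernel m t x y := rfl
    _ = ∫ p, heatKernel m t p.1 p.2 ∂(ρ.prod ρ) := MeasureTheory.integral_integral hHKbd
    _ = ∫ p, (∫ ξ, E p ξ).re ∂(ρ.prod ρ) := by
        refine integral_congr_ae (Eventually.of_forall fun p => ?_)
        show heatKernel m t p.1 p.2 = _
        simp only [hE]
        exact hk (p.1 - p.2)
    _ = (∫ p, (∫ ξ, E p ξ) ∂(ρ.prod ρ)).re := by
        simpa using Complex.reCLM.integral_comp_comm hWint
    _ = (∫ ξ, (∫ p, E p ξ ∂(ρ.prod ρ))).re := by rw [integral_integral_swap hEunc]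
    _ = (∫ ξ, ((Complex.normSq (cFun m Ω ξ) * Real.exp (-b * ‖ξ‖ ^ 2) : ℝ) : ℂ)).re := by
        congr 1
        refine integral_congr_ae (Eventually.of_forall fun ξ => ?_)
        exact (inner_eq ξ).trans (hfinal ξ)
    _ = ∫ ξ, Complex.normSq (cFun m Ω ξ) * Real.exp (-b * ‖ξ‖ ^ 2) := by
        have h := LinearIsometry.integral_comp_comm (μ := (volume :
            Measure (EuclideanSpace ℝ (Fin m)))) Complex.ofRealLI
          (fun ξ => (Complex.normSq (cFun m Ω ξ) * Real.exp (-b * ‖ξ‖ ^ 2) : ℝ))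
        simp only [Complex.ofRealLI, LinearIsometry.coe_mk, AlgHom.toLinearMap_apply,
          Complex.ofRealAm_coe] at h
        have h' := integral_ofReal (𝕜 := ℂ) (μ := volume)
          (f := fun ξ : EuclideanSpace ℝ (Fin m) => Complex.normSq (cFun m Ω ξ) * Real.exp (-b * ‖ξ‖ ^ 2))
        exact (congrArg Complex.re h').trans (Complex.ofReal_re _)
    _ = Jfun m Ω 0 t := by
        simp only [Jfun, pow_zero, one_mul, ← hbdef]

end Stmt13Aux

theorem stmt_13 (m : ℕ) (hm : 1 ≤ m) (Ω : Set (EuclideanSpace ℝ (Fin m)))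
    (hne : Ω.Nonempty) (hopen : IsOpen Ω) (hbd : Bornology.IsBounded Ω) :
    (∀ t : ℝ, 0 < t → iteratedDeriv 3 (heatContent m Ω) t ≤ 0) ∧
      AntitoneOn (iteratedDeriv 2 (heatContent m Ω)) (Set.Ioi 0) := by
  classical
  have hmeas := hopen.measurableSet
  set H := heatContent m Ω with hH
  set J := Stmt13Aux.Jfun m Ω with hJ
  have hIoi : ∀ t : ℝ, 0 < t → Ioi (0:ℝ) ∈ nhds t := fun t ht => isOpen_Ioi.mem_nhds ht
  have E0 : ∀ t : ℝ, 0 < t → H =ᶠ[nhds t] J 0 := fun t ht =>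
    eventually_of_mem (hIoi t ht) (fun s hs => Stmt13Aux.key hmeas hbd hs)
  have D1 : ∀ t : ℝ, 0 < t → deriv H t = -(J 1 t) := by
    intro t ht
    rw [(E0 t ht).deriv_eq]
    exact (Stmt13Aux.J_hasDerivAt hbd 0 ht).deriv
  have E1 : ∀ t : ℝ, 0 < t → deriv H =ᶠ[nhds t] fun s => -(J 1 s) := fun t ht =>
    eventually_of_mem (hIoi t ht) (fun s hs => D1 s hs)
  have hd1 : ∀ t : ℝ, 0 < t → HasDerivAt (fun s => -(J 1 s)) (J 2 t) t := by
    intro t ht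
    have := (Stmt13Aux.J_hasDerivAt hbd 1 ht).neg
    rw [neg_neg] at this
    exact this
  have D2 : ∀ t : ℝ, 0 < t → deriv (deriv H) t = J 2 t := by
    intro t ht
    rw [(E1 t ht).deriv_eq]
    exact (hd1 t ht).deriv
  have E2 : ∀ t : ℝ, 0 < t → deriv (deriv H) =ᶠ[nhds t] J 2 := fun t ht =>
    eventually_of_mem (hIoi t ht) (fun s hs => D2 s hs)
  have hd2 : ∀ t : ℝ, 0 < t → HasDerivAt (deriv (deriv H)) (-(J 3 t)) t := by
    intro t ht
    exact (Stmt13Aux.J_hasDerivAt hbd 2 ht).congr_of_eventuallyEq (E2 t ht)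
  have D3 : ∀ t : ℝ, 0 < t → deriv (deriv (deriv H)) t = -(J 3 t) := fun t ht =>
    (hd2 t ht).deriv
  have h2 : iteratedDeriv 2 H = deriv (deriv H) := by
    rw [iteratedDeriv_succ, iteratedDeriv_one]
  have h3 : iteratedDeriv 3 H = deriv (deriv (deriv H)) := by
    rw [iteratedDeriv_succ, h2]
  constructor
  · intro t ht
    rw [h3, D3 t ht, neg_nonpos]
    exact Stmt13Aux.J_nonneg 3 t
  · rw [h2]
    apply antitoneOn_of_deriv_nonpos (convex_Ioi 0)
    · intro t ht
      exact ((hd2 t ht).differentiableAt.continuousAt).continuousWithinAt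
    · intro t ht
      rw [interior_Ioi] at ht
      exact (hd2 t ht).differentiableAt.differentiableWithinAt
    · intro t ht
      rw [interior_Ioi] at ht
      rw [D3 t ht]
      simpa using Stmt13Aux.J_nonneg 3 t
end

section
/- Let Ω ⊆ ℝ^m be a nonempty open set with diam(Ω) < ∞. Then for t ≥ (diam Ω)², the function t ↦ t^{(2m-1)/4}·H_Ω(t) is non-increasing. -/
open MeasureTheory Real Set Filter

lemma key_mono (c s t : ℝ) (hc : 0 ≤ c) (hcs : c ≤ s) (hs : 0 < s) (hst : s ≤ t) :
    t ^ (-(1:ℝ)/4) * Real.exp (-c / (4 * t)) ≤ s ^ (-(1:ℝ)/4) * Real.exp (-c / (4 * s)) := by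
  have ht : 0 < t := hs.trans_le hst
  rw [Real.rpow_def_of_pos hs, Real.rpow_def_of_pos ht, ← Real.exp_add, ← Real.exp_add]
  apply Real.exp_le_exp.mpr
  have h1 : Real.log (s / t) ≤ s / t - 1 := Real.log_le_sub_one_of_pos (div_pos hs ht)
  rw [Real.log_div hs.ne' ht.ne'] at h1
  have h2 : c / (4 * s) - c / (4 * t) ≤ (1 - s / t) / 4 := by
    have e1 : c / (4 * s) - c / (4 * t) = c * (t - s) / (4 * (s * t)) := by
      field_simp
    have e2 : (1 - s / t) / 4 = s * (t - s) / (4 * (s * t)) := by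
      field_simp
    rw [e1, e2]
    have hpos : (0:ℝ) < 4 * (s * t) := by positivity
    exact (div_le_div_iff_of_pos_right hpos).mpr (mul_le_mul_of_nonneg_right hcs (by linarith))
  have g1 : -c / (4 * t) = -(c / (4 * t)) := neg_div _ _
  have g2 : -c / (4 * s) = -(c / (4 * s)) := neg_div _ _
  rw [g1, g2]
  linarith

theorem stmt_18 (m : ℕ) (hm : 1 ≤ m) (Ω : Set (EuclideanSpace ℝ (Fin m)))
    (hne : Ω.Nonempty) (hopen : IsOpen Ω) (hbd : Bornology.IsBounded Ω) :
    AntitoneOn (fun t : ℝ => t ^ ((2 * (m : ℝ) - 1) / 4) * heatContent m Ω t)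
      (Set.Ici ((Metric.diam Ω) ^ 2)) := by
  haveI : Nonempty (Fin m) := ⟨⟨0, hm⟩⟩
  -- Ω is nontrivial
  obtain ⟨x₀, hx₀⟩ := hne
  haveI := Module.punctured_nhds_neBot ℝ (EuclideanSpace ℝ (Fin m)) x₀
  have hmem : Ω ∩ {x₀}ᶜ ∈ nhdsWithin x₀ {x₀}ᶜ :=
    inter_mem (mem_nhdsWithin_of_mem_nhds (hopen.mem_nhds hx₀)) self_mem_nhdsWithin
  obtain ⟨y₀, hy₀Ω, hy₀ne⟩ := Filter.nonempty_of_mem hmem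
  have hnt : Ω.Nontrivial := ⟨y₀, hy₀Ω, x₀, hx₀, hy₀ne⟩
  have hdpos : 0 < Metric.diam Ω := by
    rw [Metric.diam]
    exact ENNReal.toReal_pos (EMetric.diam_pos_iff.mpr hnt).ne' hbd.ediam_ne_top
  set d := Metric.diam Ω with hd
  -- constants
  set C : ℝ := (4 * π) ^ (-(m : ℝ) / 2) with hC
  have hCpos : 0 < C := Real.rpow_pos_of_pos (by positivity) _
  have hΩmeas : MeasurableSet Ω := hopen.measurableSet
  have hΩfin : volume Ω < ⊤ := hbd.measure_lt_top
  haveI : IsFiniteMeasure (volume.restrict Ω) := ⟨by rwa [Measure.restrict_apply_univ]⟩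
  -- rewriting
  have hrw : ∀ t : ℝ, 0 < t →
      t ^ ((2 * (m : ℝ) - 1) / 4) * heatContent m Ω t =
        ∫ x in Ω, ∫ y in Ω,
          C * t ^ (-(1:ℝ)/4) * Real.exp (-‖x - y‖ ^ 2 / (4 * t)) := by
    intro t ht
    have hker : ∀ x y : EuclideanSpace ℝ (Fin m),
        t ^ ((2 * (m : ℝ) - 1) / 4) * heatKernel m t x y =
          C * t ^ (-(1:ℝ)/4) * Real.exp (-‖x - y‖ ^ 2 / (4 * t)) := by
      intro x y
      rw [heatKernel, ← mul_assoc]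
      congr 1
      rw [Real.mul_rpow (by positivity) ht.le, hC, mul_left_comm, ← Real.rpow_add ht]
      congr 1
      ring
    rw [heatContent, ← MeasureTheory.integral_const_mul]
    refine setIntegral_congr_fun hΩmeas fun x _ => ?_
    rw [← MeasureTheory.integral_const_mul]
    exact setIntegral_congr_fun hΩmeas fun y _ => hker x y
  -- integrability facts
  have hcont : ∀ t : ℝ, 0 < t → Continuous (fun p : EuclideanSpace ℝ (Fin m) × EuclideanSpace ℝ (Fin m) =>
      C * t ^ (-(1:ℝ)/4) * Real.exp (-‖p.1 - p.2‖ ^ 2 / (4 * t))) := by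
    intro t ht
    exact continuous_const.mul (Real.continuous_exp.comp
      (((continuous_fst.sub continuous_snd).norm.pow 2).neg.div_const _))
  have hintinner : ∀ t : ℝ, 0 < t → ∀ x : EuclideanSpace ℝ (Fin m),
      IntegrableOn (fun y => C * t ^ (-(1:ℝ)/4) * Real.exp (-‖x - y‖ ^ 2 / (4 * t))) Ω := by
    intro t ht x
    refine Integrable.mono' (integrable_const (C * t ^ (-(1:ℝ)/4)))
      (((hcont t ht).comp (Continuous.prodMk_right x)).aestronglyMeasurable) ?_
    · filter_upwards with y
      rw [Real.norm_eq_abs, abs_of_nonneg (by positivity)]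
      have h1 : Real.exp (-‖x - y‖ ^ 2 / (4 * t)) ≤ 1 :=
        Real.exp_le_one_iff.mpr
          (div_nonpos_of_nonpos_of_nonneg (neg_nonpos_of_nonneg (by positivity)) (by positivity))
      exact mul_le_of_le_one_right (mul_pos hCpos (Real.rpow_pos_of_pos ht _)).le h1
  have hintouter : ∀ t : ℝ, 0 < t →
      IntegrableOn (fun x => ∫ y in Ω, C * t ^ (-(1:ℝ)/4) * Real.exp (-‖x - y‖ ^ 2 / (4 * t))) Ω := by
    intro t ht
    refine Integrable.mono' (integrable_const (C * t ^ (-(1:ℝ)/4) * (volume Ω).toReal))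
      ((hcont t ht).stronglyMeasurable.integral_prod_right'.aestronglyMeasurable) ?_
    · filter_upwards with x
      refine (norm_integral_le_of_norm_le_const (C := C * t ^ (-(1:ℝ)/4)) ?_).trans_eq ?_
      · filter_upwards with y
        · rw [Real.norm_eq_abs, abs_of_nonneg (by positivity)]
          have h1 : Real.exp (-‖x - y‖ ^ 2 / (4 * t)) ≤ 1 :=
            Real.exp_le_one_iff.mpr
              (div_nonpos_of_nonpos_of_nonneg (neg_nonpos_of_nonneg (by positivity)) (by positivity))
          exact mul_le_of_le_one_right (mul_pos hCpos (Real.rpow_pos_of_pos ht _)).le h1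
      · rw [measureReal_restrict_apply_univ, measureReal_def]
  -- main monotonicity
  intro a ha b hb hab
  simp only [mem_Ici] at ha hb
  have ha0 : 0 < a := lt_of_lt_of_le (by positivity) ha
  have hb0 : 0 < b := ha0.trans_le hab
  dsimp only
  rw [hrw a ha0, hrw b hb0]
  refine setIntegral_mono_on (hintouter b hb0) (hintouter a ha0) hΩmeas fun x hx => ?_
  refine setIntegral_mono_on (hintinner b hb0 x) (hintinner a ha0 x) hΩmeas fun y hy => ?_
  rw [mul_assoc, mul_assoc]
  refine mul_le_mul_of_nonneg_left ?_ hCpos.le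
  refine key_mono (‖x - y‖ ^ 2) a b (by positivity) ?_ ha0 hab
  have hdist : ‖x - y‖ ≤ d := by
    rw [← dist_eq_norm]
    exact Metric.dist_le_diam_of_mem hbd hx hy
  calc ‖x - y‖ ^ 2 ≤ d ^ 2 := by nlinarith [norm_nonneg (x - y)]
    _ ≤ a := ha
end

section
/- For a nonempty open bounded set Ω ⊆ ℝ^m, the function t ↦ -H_Ω'(t) is completely monotone on (0,∞); in particular (-1)^k H_Ω^{(k+1)}(t) ≤ 0 for all k ≥ 0 and t > 0. -/
open MeasureTheory Real Set Filter

namespace Stmt19Aux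

open MeasureTheory

local notation "⟪" x ", " y "⟫" => @inner ℝ _ _ x y

variable {m : ℕ}

lemma int_gauss (m : ℕ) {c : ℝ} (hc : 0 < c) :
    Integrable (fun ξ : EuclideanSpace ℝ (Fin m) => rexp (-(c * ‖ξ‖ ^ 2))) := by
  have h := GaussianFourier.integrable_cexp_neg_mul_sq_norm_add
    (V := EuclideanSpace ℝ (Fin m)) (b := ((c : ℝ) : ℂ)) (by simpa using hc) 0 0
  have h2 := h.norm
  refine h2.congr (Filter.Eventually.of_forall fun v => ?_)
  have : (-(c:ℂ) * ‖v‖ ^ 2 + 0 * ((inner ℝ (0 : EuclideanSpace ℝ (Fin m)) v : ℝ) : ℂ))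
      = ((-(c * ‖v‖ ^ 2) : ℝ) : ℂ) := by push_cast; ring
  show ‖Complex.exp (-(c:ℂ) * ‖v‖ ^ 2 + 0 * ((inner ℝ (0 : EuclideanSpace ℝ (Fin m)) v : ℝ) : ℂ))‖
      = rexp (-(c * ‖v‖ ^ 2))
  rw [this, ← Complex.ofReal_exp, Complex.norm_real, Real.norm_eq_abs,
    abs_of_nonneg (Real.exp_pos _).le]

/-- Gaussian moment integrability. -/
lemma int_mom (m n : ℕ) {c : ℝ} (hc : 0 < c) :
    Integrable (fun ξ : EuclideanSpace ℝ (Fin m) => ‖ξ‖ ^ n * rexp (-(c * ‖ξ‖ ^ 2))) := by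
  have hc2 : 0 < c / 2 := half_pos hc
  set K : ℝ := 1 + (n.factorial : ℝ) * (2 / c) ^ n with hK
  have hKpos : 0 < K := by positivity
  have hbase := (int_gauss m hc2).const_mul K
  refine hbase.mono' ?_ (Filter.Eventually.of_forall fun ξ => ?_)
  · exact (((continuous_norm.pow n).mul
      (((continuous_const.mul ((continuous_norm.pow 2))).neg).rexp)).aestronglyMeasurable)
  · set r := ‖ξ‖ with hr
    have hr0 : 0 ≤ r := norm_nonneg _
    have key : r ^ n * rexp (-(c / 2 * r ^ 2)) ≤ K := by
      have h1 : r ^ n ≤ 1 + r ^ (2 * n) := by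
        rcases le_or_gt r 1 with h | h
        · have := pow_le_one₀ hr0 h (n := n)
          nlinarith [pow_nonneg hr0 (2*n)]
        · have : r ^ n ≤ r ^ (2 * n) := pow_le_pow_right₀ h.le (by omega)
          linarith
      have h2 : r ^ (2 * n) ≤ (n.factorial : ℝ) * (2 / c) ^ n * rexp (c / 2 * r ^ 2) := by
        have hexp : (c / 2 * r ^ 2) ^ n / (n.factorial : ℝ) ≤ rexp (c / 2 * r ^ 2) :=
          Real.pow_div_factorial_le_exp (x := c / 2 * r ^ 2) (by positivity) n
        have hfe : (c / 2 * r ^ 2) ^ n ≤ (n.factorial : ℝ) * rexp (c / 2 * r ^ 2) := by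
          rw [div_le_iff₀ (by positivity)] at hexp; linarith [hexp]
        have : r ^ (2 * n) = ((2 / c) ^ n) * ((c/2) ^ n * (r ^ 2) ^ n) := by
          rw [pow_mul, ← mul_assoc, ← mul_pow, ← mul_pow]
          field_simp
        rw [this, ← mul_pow]
        calc (2 / c) ^ n * (c / 2 * r ^ 2) ^ n
            ≤ (2 / c) ^ n * ((n.factorial : ℝ) * rexp (c / 2 * r ^ 2)) := by
              apply mul_le_mul_of_nonneg_left hfe (by positivity)
          _ = (n.factorial : ℝ) * (2 / c) ^ n * rexp (c / 2 * r ^ 2) := by ring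
      have hexp_pos : 0 < rexp (-(c / 2 * r ^ 2)) := Real.exp_pos _
      have hle1 : rexp (-(c / 2 * r ^ 2)) ≤ 1 :=
        Real.exp_le_one_iff.2 (neg_nonpos.2 (by positivity))
      calc r ^ n * rexp (-(c / 2 * r ^ 2))
          ≤ (1 + r ^ (2 * n)) * rexp (-(c / 2 * r ^ 2)) :=
            mul_le_mul_of_nonneg_right h1 hexp_pos.le
        _ ≤ 1 * 1 + (n.factorial : ℝ) * (2 / c) ^ n
              * (rexp (c / 2 * r ^ 2) * rexp (-(c / 2 * r ^ 2))) := by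
            nlinarith [mul_le_mul_of_nonneg_right h2 hexp_pos.le]
        _ = K := by rw [← Real.exp_add]; simp [hK]
    have e1 : ‖r ^ n * rexp (-(c * r ^ 2))‖ = r ^ n * rexp (-(c * r ^ 2)) := by
      rw [norm_of_nonneg]; positivity
    rw [e1]
    have e2 : r ^ n * rexp (-(c * r ^ 2))
        = (r ^ n * rexp (-(c / 2 * r ^ 2))) * rexp (-(c / 2 * r ^ 2)) := by
      rw [mul_assoc, ← Real.exp_add]; ring_nf
    rw [e2]
    exact mul_le_mul_of_nonneg_right key (Real.exp_pos _).le

/-- The Gaussian Fourier-type integral, real form. -/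
lemma gauss_int (ht : (0:ℝ) < t) (z : EuclideanSpace ℝ (Fin m)) :
    ∫ ξ : EuclideanSpace ℝ (Fin m),
        Complex.exp (-(t:ℂ) * ‖ξ‖ ^ 2 + (-Complex.I) * ((inner ℝ z ξ : ℝ) : ℂ)) =
      (((π / t) ^ ((m:ℝ) / 2) * rexp (-‖z‖ ^ 2 / (4 * t)) : ℝ) : ℂ) := by
  have h := GaussianFourier.integral_cexp_neg_mul_sq_norm_add
    (V := EuclideanSpace ℝ (Fin m)) (b := (t:ℂ)) (by simpa using ht) (-Complex.I) z
  rw [h, finrank_euclideanSpace_fin]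
  have h1 : ((-Complex.I) ^ 2 * (‖z‖:ℂ) ^ 2 / (4 * (t:ℂ))) = ((-‖z‖^2/(4*t) : ℝ) : ℂ) := by
    rw [neg_pow, Complex.I_sq]; push_cast; ring
  have h2 : ((π:ℂ) / (t:ℂ)) ^ ((m:ℂ) / 2) = (((π / t) ^ ((m:ℝ)/2) : ℝ) : ℂ) := by
    rw [show ((m:ℂ)/2) = (((m:ℝ)/2 : ℝ) : ℂ) by push_cast; ring,
      ← Complex.ofReal_div, Complex.ofReal_cpow (by positivity)]
  rw [h1, h2, ← Complex.ofReal_exp, ← Complex.ofReal_mul]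

lemma const_eq {t : ℝ} (ht : 0 < t) :
    (4 * π * t) ^ (-(m : ℝ) / 2) = ((2 * π) ^ m)⁻¹ * (π / t) ^ ((m:ℝ) / 2) := by
  have hπ := pi_pos
  have h4 : (0:ℝ) < 4 * π * t := by positivity
  have h2 : (0:ℝ) < π / t := by positivity
  calc (4 * π * t) ^ (-(m : ℝ) / 2)
      = (4 * π * t) ^ (-(m : ℝ) / 2) * ((π / t) ^ (-(m:ℝ) / 2) * (π / t) ^ ((m:ℝ) / 2)) := by
        rw [← Real.rpow_add h2, neg_div, neg_add_cancel, Real.rpow_zero, mul_one]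
    _ = ((4 * π * t) * (π / t)) ^ (-(m:ℝ) / 2) * (π / t) ^ ((m:ℝ) / 2) := by
        rw [← mul_assoc, ← Real.mul_rpow h4.le h2.le]
    _ = ((2 * π) ^ m)⁻¹ * (π / t) ^ ((m:ℝ) / 2) := by
        congr 1
        rw [show (4 * π * t) * (π / t) = (2 * π) ^ (2:ℕ) by field_simp; ring]
        rw [← Real.rpow_natCast (2 * π) 2, ← Real.rpow_mul (by positivity)]
        rw [show ((2:ℕ):ℝ) * (-(m:ℝ)/2) = -(m:ℝ) by push_cast; ring,
          Real.rpow_neg (by positivity), Real.rpow_natCast]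

noncomputable def FF (m : ℕ) (Ω : Set (EuclideanSpace ℝ (Fin m))) (ξ : EuclideanSpace ℝ (Fin m)) : ℂ :=
  ∫ x in Ω, Complex.exp ((-Complex.I) * ((inner ℝ x ξ : ℝ) : ℂ))

lemma norm_aux {m : ℕ} (x ξ : EuclideanSpace ℝ (Fin m)) :
    ‖Complex.exp ((-Complex.I) * ((inner ℝ x ξ : ℝ) : ℂ))‖ = 1 := by
  rw [Complex.norm_exp]
  simp

noncomputable def gg (m : ℕ) (Ω : Set (EuclideanSpace ℝ (Fin m))) (ξ : EuclideanSpace ℝ (Fin m)) : ℝ :=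
  ((2 * π) ^ m)⁻¹ * Complex.normSq (FF m Ω ξ)

lemma gg_nonneg (Ω : Set (EuclideanSpace ℝ (Fin m))) (ξ : EuclideanSpace ℝ (Fin m)) :
    0 ≤ gg m Ω ξ := by
  have := Complex.normSq_nonneg (FF m Ω ξ)
  have h2 : (0:ℝ) ≤ ((2 * π) ^ m)⁻¹ := by positivity
  exact mul_nonneg h2 this

lemma FF_continuous (Ω : Set (EuclideanSpace ℝ (Fin m))) (hopen : IsOpen Ω)
    (hbd : Bornology.IsBounded Ω) : Continuous (FF m Ω) := by
  haveI : IsFiniteMeasure (volume.restrict Ω) :=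
    ⟨by rw [Measure.restrict_apply_univ]; exact hbd.measure_lt_top⟩
  apply continuous_of_dominated (bound := fun _ => (1:ℝ))
  · intro ξ
    apply Continuous.aestronglyMeasurable
    exact Complex.continuous_exp.comp (continuous_const.mul
      (Complex.continuous_ofReal.comp (Continuous.inner continuous_id continuous_const)))
  · intro ξ
    filter_upwards with x
    exact (norm_aux x ξ).le
  · exact integrable_const 1
  · filter_upwards with x
    exact Complex.continuous_exp.comp (continuous_const.mul
      (Complex.continuous_ofReal.comp (Continuous.inner continuous_const continuous_id)))

lemma FF_norm_le (Ω : Set (EuclideanSpace ℝ (Fin m)))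
    (hbd : Bornology.IsBounded Ω) (ξ : EuclideanSpace ℝ (Fin m)) :
    ‖FF m Ω ξ‖ ≤ (volume Ω).toReal := by
  haveI : IsFiniteMeasure (volume.restrict Ω) :=
    ⟨by rw [Measure.restrict_apply_univ]; exact hbd.measure_lt_top⟩
  have h := norm_integral_le_of_norm_le_const (μ := volume.restrict Ω) (C := 1)
    (f := fun x => Complex.exp ((-Complex.I) * ((inner ℝ x ξ : ℝ) : ℂ)))
    (Filter.Eventually.of_forall fun x => (norm_aux x ξ).le)
  rw [measureReal_restrict_apply_univ, measureReal_def] at h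
  simpa [FF] using h

lemma gg_continuous (Ω : Set (EuclideanSpace ℝ (Fin m))) (hopen : IsOpen Ω)
    (hbd : Bornology.IsBounded Ω) : Continuous (gg m Ω) :=
  continuous_const.mul (Complex.continuous_normSq.comp (FF_continuous Ω hopen hbd))

lemma gg_bound (Ω : Set (EuclideanSpace ℝ (Fin m))) (hopen : IsOpen Ω)
    (hbd : Bornology.IsBounded Ω) (ξ : EuclideanSpace ℝ (Fin m)) :
    gg m Ω ξ ≤ ((2 * π) ^ m)⁻¹ * ((volume Ω).toReal) ^ 2 := by
  unfold gg
  apply mul_le_mul_of_nonneg_left _ (by positivity)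
  rw [Complex.normSq_eq_norm_sq]
  exact pow_le_pow_left₀ (norm_nonneg _) (FF_norm_le Ω hbd ξ) 2

set_option maxHeartbeats 2000000 in
/-- Heat content as a Laplace-type transform. -/
lemma heatContent_eq (Ω : Set (EuclideanSpace ℝ (Fin m))) (hopen : IsOpen Ω)
    (hbd : Bornology.IsBounded Ω) {t : ℝ} (ht : 0 < t) :
    heatContent m Ω t = ∫ ξ : EuclideanSpace ℝ (Fin m), rexp (-(t * ‖ξ‖ ^ 2)) * gg m Ω ξ := by
  classical
  haveI hfin : IsFiniteMeasure (volume.restrict Ω) :=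
    ⟨by rw [Measure.restrict_apply_univ]; exact hbd.measure_lt_top⟩
  set μ := volume.restrict Ω with hμdef
  set ν := μ.prod μ with hνdef
  -- Step 1 : heat content as an integral over the product measure
  have hkcont : Continuous (fun p : EuclideanSpace ℝ (Fin m) × EuclideanSpace ℝ (Fin m) =>
      heatKernel m t p.1 p.2) := by
    unfold heatKernel
    apply continuous_const.mul
    apply Real.continuous_exp.comp
    exact ((continuous_norm.comp (continuous_fst.sub continuous_snd)).pow 2).neg.div_const _
  have hkint : Integrable (fun p : EuclideanSpace ℝ (Fin m) × EuclideanSpace ℝ (Fin m) =>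
      heatKernel m t p.1 p.2) ν := by
    apply Integrable.mono' (integrable_const ((4 * π * t) ^ (-(m:ℝ) / 2)))
      hkcont.aestronglyMeasurable
    filter_upwards with p
    unfold heatKernel
    rw [Real.norm_eq_abs, abs_mul, abs_of_nonneg (Real.rpow_nonneg (by positivity) _),
      abs_of_nonneg (Real.exp_pos _).le]
    have h1 : rexp (-‖p.1 - p.2‖ ^ 2 / (4 * t)) ≤ 1 := by
      apply Real.exp_le_one_iff.2
      apply div_nonpos_of_nonpos_of_nonneg (neg_nonpos.2 (sq_nonneg _)) (by positivity)
    nlinarith [Real.rpow_nonneg (show (0:ℝ) ≤ 4 * π * t by positivity) (-(m:ℝ)/2)]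
  have step1 : heatContent m Ω t = ∫ p, heatKernel m t p.1 p.2 ∂ν := by
    rw [heatContent]
    exact integral_integral hkint
  -- the complex kernel
  set Φ : EuclideanSpace ℝ (Fin m) × (EuclideanSpace ℝ (Fin m) × EuclideanSpace ℝ (Fin m)) → ℂ :=
    fun q => Complex.exp (-(t:ℂ) * ‖q.1‖ ^ 2
      + (-Complex.I) * ((inner ℝ (q.2.1 - q.2.2) q.1 : ℝ) : ℂ)) with hΦdef
  have hΦcont : Continuous Φ := by
    rw [hΦdef]
    apply Complex.continuous_exp.comp
    have c1 : Continuous (fun q : EuclideanSpace ℝ (Fin m) ×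
        (EuclideanSpace ℝ (Fin m) × EuclideanSpace ℝ (Fin m)) => -(t:ℂ) * (‖q.1‖:ℂ) ^ 2) :=
      continuous_const.mul ((Complex.continuous_ofReal.comp continuous_fst.norm).pow 2)
    have c2 : Continuous (fun q : EuclideanSpace ℝ (Fin m) ×
        (EuclideanSpace ℝ (Fin m) × EuclideanSpace ℝ (Fin m)) =>
          (-Complex.I) * ((inner ℝ (q.2.1 - q.2.2) q.1 : ℝ) : ℂ)) :=
      continuous_const.mul (Complex.continuous_ofReal.comp
        ((continuous_snd.fst.sub continuous_snd.snd).inner continuous_fst))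
    exact c1.add c2
  have hΦnorm : ∀ q, ‖Φ q‖ = rexp (-(t * ‖q.1‖ ^ 2)) := by
    intro q
    simp only [hΦdef]
    have h1 : (-(t:ℂ) * (‖q.1‖:ℂ) ^ 2) = ((-(t * ‖q.1‖ ^ 2) : ℝ) : ℂ) := by push_cast; ring
    rw [Complex.norm_exp, Complex.add_re, h1, Complex.ofReal_re]
    simp
  have hΦint : Integrable Φ (volume.prod ν) := by
    have hdom : Integrable (fun q : EuclideanSpace ℝ (Fin m) ×
        (EuclideanSpace ℝ (Fin m) × EuclideanSpace ℝ (Fin m)) =>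
        rexp (-(t * ‖q.1‖ ^ 2)) * (1:ℝ)) (volume.prod ν) :=
      Integrable.mul_prod (int_gauss m ht) (integrable_const 1)
    apply Integrable.mono' hdom hΦcont.aestronglyMeasurable
    filter_upwards with q
    rw [hΦnorm q, mul_one]
  have swap : ∫ ξ, ∫ p, Φ (ξ, p) ∂ν = ∫ p, (∫ ξ, Φ (ξ, p)) ∂ν := by
    exact integral_integral_swap (f := fun ξ p => Φ (ξ, p)) hΦint
  -- inner integral over ν factorizes
  have inner_eq : ∀ ξ : EuclideanSpace ℝ (Fin m),
      ∫ p, Φ (ξ, p) ∂ν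
        = (((rexp (-(t * ‖ξ‖ ^ 2)) * Complex.normSq (FF m Ω ξ)) : ℝ) : ℂ) := by
    intro ξ
    have hsplit : ∀ p : EuclideanSpace ℝ (Fin m) × EuclideanSpace ℝ (Fin m),
        Φ (ξ, p) = Complex.exp (-(t:ℂ) * ‖ξ‖ ^ 2) *
          (Complex.exp ((-Complex.I) * ((inner ℝ p.1 ξ : ℝ) : ℂ)) *
            Complex.exp (Complex.I * ((inner ℝ p.2 ξ : ℝ) : ℂ))) := by
      intro p
      simp only [hΦdef]
      rw [← Complex.exp_add, ← Complex.exp_add]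
      congr 1
      have : (inner ℝ (p.1 - p.2) ξ : ℝ) = (inner ℝ p.1 ξ : ℝ) - (inner ℝ p.2 ξ : ℝ) :=
        inner_sub_left _ _ _
      rw [this]
      push_cast
      ring
    simp_rw [hsplit]
    rw [MeasureTheory.integral_const_mul, hνdef]
    have hpm := integral_prod_mul (μ := μ) (ν := μ)
      (f := fun x : EuclideanSpace ℝ (Fin m) => Complex.exp ((-Complex.I) * ((inner ℝ x ξ : ℝ) : ℂ)))
      (g := fun y : EuclideanSpace ℝ (Fin m) => Complex.exp (Complex.I * ((inner ℝ y ξ : ℝ) : ℂ)))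
    rw [hpm]
    have hconj : (∫ y, Complex.exp (Complex.I * ((inner ℝ y ξ : ℝ) : ℂ)) ∂μ)
        = (starRingEnd ℂ) (FF m Ω ξ) := by
      rw [FF, ← integral_conj]
      congr 1
      funext y
      rw [← Complex.exp_conj]
      congr 1
      simp [map_mul, Complex.conj_I]
    have hFF : (∫ x, Complex.exp ((-Complex.I) * ((inner ℝ x ξ : ℝ) : ℂ)) ∂μ) = FF m Ω ξ := rfl
    rw [hconj, hFF, Complex.mul_conj]
    have hre : (-(t:ℂ) * ‖ξ‖ ^ 2) = ((-(t * ‖ξ‖ ^ 2) : ℝ) : ℂ) := by push_cast; ring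
    rw [hre, ← Complex.ofReal_exp, ← Complex.ofReal_mul]
  have rhs_eq : ∀ p : EuclideanSpace ℝ (Fin m) × EuclideanSpace ℝ (Fin m),
      ∫ ξ, Φ (ξ, p)
        = ((((π / t) ^ ((m:ℝ) / 2) * rexp (-‖p.1 - p.2‖ ^ 2 / (4 * t))) : ℝ) : ℂ) := by
    intro p
    exact gauss_int ht (p.1 - p.2)
  -- put everything together
  have kernel_eq : ∀ p : EuclideanSpace ℝ (Fin m) × EuclideanSpace ℝ (Fin m),
      heatKernel m t p.1 p.2
        = ((2 * π) ^ m)⁻¹ * ((π / t) ^ ((m:ℝ) / 2) * rexp (-‖p.1 - p.2‖ ^ 2 / (4 * t))) := by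
    intro p
    rw [heatKernel, const_eq ht]
    ring
  calc heatContent m Ω t
      = ∫ p, heatKernel m t p.1 p.2 ∂ν := step1
    _ = ((2 * π) ^ m)⁻¹ * ∫ p, ((π / t) ^ ((m:ℝ) / 2)
          * rexp (-‖p.1 - p.2‖ ^ 2 / (4 * t))) ∂ν := by
        simp_rw [kernel_eq]
        rw [MeasureTheory.integral_const_mul]
    _ = ((2 * π) ^ m)⁻¹ * (∫ p, (∫ ξ, Φ (ξ, p)) ∂ν).re := by
        congr 1
        have : (∫ p, (∫ ξ, Φ (ξ, p)) ∂ν)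
            = (((∫ p, ((π / t) ^ ((m:ℝ) / 2) * rexp (-‖p.1 - p.2‖ ^ 2 / (4 * t))) ∂ν) : ℝ) : ℂ) := by
          simp_rw [rhs_eq]
          exact integral_ofReal
        rw [this, Complex.ofReal_re]
    _ = ((2 * π) ^ m)⁻¹ * (∫ ξ, ∫ p, Φ (ξ, p) ∂ν).re := by rw [swap]
    _ = ((2 * π) ^ m)⁻¹ * ∫ ξ, rexp (-(t * ‖ξ‖ ^ 2)) * Complex.normSq (FF m Ω ξ) := by
        congr 1
        simp_rw [inner_eq]
        rw [show (∫ ξ : EuclideanSpace ℝ (Fin m),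
              (((rexp (-(t * ‖ξ‖ ^ 2)) * Complex.normSq (FF m Ω ξ)) : ℝ) : ℂ))
            = (((∫ ξ : EuclideanSpace ℝ (Fin m),
              rexp (-(t * ‖ξ‖ ^ 2)) * Complex.normSq (FF m Ω ξ)) : ℝ) : ℂ) from integral_ofReal,
          Complex.ofReal_re]
    _ = ∫ ξ : EuclideanSpace ℝ (Fin m), rexp (-(t * ‖ξ‖ ^ 2)) * gg m Ω ξ := by
        rw [← MeasureTheory.integral_const_mul]
        congr 1
        funext ξ
        rw [gg]
        ring

noncomputable def J (m : ℕ) (Ω : Set (EuclideanSpace ℝ (Fin m))) (n : ℕ) (t : ℝ) : ℝ :=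
  ∫ ξ : EuclideanSpace ℝ (Fin m), (-(‖ξ‖ ^ 2)) ^ n * rexp (-(t * ‖ξ‖ ^ 2)) * gg m Ω ξ

lemma hasDerivAt_J (Ω : Set (EuclideanSpace ℝ (Fin m))) (hopen : IsOpen Ω)
    (hbd : Bornology.IsBounded Ω) (n : ℕ) {t : ℝ} (ht : 0 < t) :
    HasDerivAt (J m Ω n) (J m Ω (n + 1) t) t := by
  have hgc := gg_continuous Ω hopen hbd
  have hg0 := gg_nonneg (m := m) Ω
  set C := ((2 * π) ^ m)⁻¹ * ((volume Ω).toReal) ^ 2 with hCdef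
  have hgC : ∀ ξ, gg m Ω ξ ≤ C := fun ξ => gg_bound Ω hopen hbd ξ
  have ht2 : 0 < t / 2 := half_pos ht
  have hC0 : 0 ≤ C := le_trans (hg0 0) (hgC 0)
  have hmeas : ∀ s : ℝ, AEStronglyMeasurable (fun ξ : EuclideanSpace ℝ (Fin m) =>
      (-(‖ξ‖ ^ 2)) ^ n * rexp (-(s * ‖ξ‖ ^ 2)) * gg m Ω ξ) volume := by
    intro s
    apply Continuous.aestronglyMeasurable
    exact (((continuous_norm.pow 2).neg.pow n).mul
      ((continuous_const.mul (continuous_norm.pow 2)).neg.rexp)).mul hgc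
  have hmeas' : AEStronglyMeasurable (fun ξ : EuclideanSpace ℝ (Fin m) =>
      (-(‖ξ‖ ^ 2)) ^ (n + 1) * rexp (-(t * ‖ξ‖ ^ 2)) * gg m Ω ξ) volume := by
    apply Continuous.aestronglyMeasurable
    exact (((continuous_norm.pow 2).neg.pow (n+1)).mul
      ((continuous_const.mul (continuous_norm.pow 2)).neg.rexp)).mul hgc
  have habs : ∀ (j : ℕ) (s : ℝ) (ξ : EuclideanSpace ℝ (Fin m)),
      ‖(-(‖ξ‖ ^ 2)) ^ j * rexp (-(s * ‖ξ‖ ^ 2)) * gg m Ω ξ‖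
        = ‖ξ‖ ^ (2 * j) * rexp (-(s * ‖ξ‖ ^ 2)) * gg m Ω ξ := by
    intro j s ξ
    rw [Real.norm_eq_abs, abs_mul, abs_mul, abs_pow, abs_neg, abs_of_nonneg (sq_nonneg _),
      abs_of_nonneg (Real.exp_pos _).le, abs_of_nonneg (hg0 ξ), ← pow_mul]
  have key := hasDerivAt_integral_of_dominated_loc_of_deriv_le (μ := volume) (x₀ := t)
    (s := Metric.ball t (t / 2))
    (F := fun s ξ => (-(‖ξ‖ ^ 2)) ^ n * rexp (-(s * ‖ξ‖ ^ 2)) * gg m Ω ξ)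
    (F' := fun s ξ => (-(‖ξ‖ ^ 2)) ^ (n + 1) * rexp (-(s * ‖ξ‖ ^ 2)) * gg m Ω ξ)
    (bound := fun ξ => C * (‖ξ‖ ^ (2 * (n + 1)) * rexp (-(t / 2 * ‖ξ‖ ^ 2))))
    (Metric.ball_mem_nhds t ht2) (Filter.Eventually.of_forall hmeas) ?_ hmeas' ?_ ?_ ?_
  · exact key.2
  · apply Integrable.mono' ((int_mom m (2 * n) ht).const_mul C)
    · exact hmeas t
    · filter_upwards with ξ
      rw [habs]
      calc ‖ξ‖ ^ (2 * n) * rexp (-(t * ‖ξ‖ ^ 2)) * gg m Ω ξ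
          ≤ ‖ξ‖ ^ (2 * n) * rexp (-(t * ‖ξ‖ ^ 2)) * C := by
            apply mul_le_mul_of_nonneg_left (hgC ξ) (by positivity)
        _ = C * (‖ξ‖ ^ (2 * n) * rexp (-(t * ‖ξ‖ ^ 2))) := by ring
  · filter_upwards with ξ
    intro s hs
    have hs2 : t / 2 ≤ s := by
      rw [Metric.mem_ball, Real.dist_eq, abs_lt] at hs
      linarith
    rw [habs]
    have hexp : rexp (-(s * ‖ξ‖ ^ 2)) ≤ rexp (-(t / 2 * ‖ξ‖ ^ 2)) := by
      apply Real.exp_le_exp.2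
      have := sq_nonneg ‖ξ‖
      nlinarith
    calc ‖ξ‖ ^ (2 * (n + 1)) * rexp (-(s * ‖ξ‖ ^ 2)) * gg m Ω ξ
        ≤ ‖ξ‖ ^ (2 * (n + 1)) * rexp (-(t / 2 * ‖ξ‖ ^ 2)) * C := by
          apply mul_le_mul (mul_le_mul_of_nonneg_left hexp (by positivity)) (hgC ξ)
            (hg0 ξ) (by positivity)
      _ = C * (‖ξ‖ ^ (2 * (n + 1)) * rexp (-(t / 2 * ‖ξ‖ ^ 2))) := by ring
  · exact (int_mom m (2 * (n + 1)) ht2).const_mul C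
  · filter_upwards with ξ
    intro s hs
    have h1 : HasDerivAt (fun s : ℝ => -(s * ‖ξ‖ ^ 2)) (-(‖ξ‖ ^ 2)) s := by
      exact (((hasDerivAt_id s).mul_const (‖ξ‖ ^ 2)).neg).congr_deriv (by ring)
    have h2 := h1.exp
    have h3 := (h2.const_mul ((-(‖ξ‖ ^ 2)) ^ n)).mul_const (gg m Ω ξ)
    refine HasDerivAt.congr_deriv h3 ?_
    rw [pow_succ]
    ring

lemma iteratedDeriv_J (Ω : Set (EuclideanSpace ℝ (Fin m))) (hopen : IsOpen Ω)
    (hbd : Bornology.IsBounded Ω) (n : ℕ) :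
    ∀ t : ℝ, 0 < t → iteratedDeriv n (J m Ω 0) t = J m Ω n t := by
  induction n with
  | zero => intro t ht; simp [iteratedDeriv_zero]
  | succ n ih =>
    intro t ht
    rw [iteratedDeriv_succ]
    have hev : iteratedDeriv n (J m Ω 0) =ᶠ[nhds t] J m Ω n := by
      filter_upwards [IsOpen.mem_nhds isOpen_Ioi (mem_Ioi.2 ht)] with s hs
      exact ih s hs
    rw [hev.deriv_eq]
    exact (hasDerivAt_J Ω hopen hbd n ht).deriv

end Stmt19Aux

open Stmt19Aux in
theorem stmt_19 (m : ℕ) (hm : 1 ≤ m) (Ω : Set (EuclideanSpace ℝ (Fin m)))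
    (hne : Ω.Nonempty) (hopen : IsOpen Ω) (hbd : Bornology.IsBounded Ω) :
    ∀ (k : ℕ) (t : ℝ), 0 < t →
      (-1 : ℝ) ^ k * iteratedDeriv (k + 1) (heatContent m Ω) t ≤ 0 := by
  intro k t ht
  have hev : heatContent m Ω =ᶠ[nhds t] J m Ω 0 := by
    filter_upwards [IsOpen.mem_nhds isOpen_Ioi (mem_Ioi.2 ht)] with s hs
    have := heatContent_eq Ω hopen hbd (t := s) hs
    simpa [J] using this
  rw [hev.iteratedDeriv_eq (k + 1), iteratedDeriv_J Ω hopen hbd (k + 1) t ht]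
  have : (-1 : ℝ) ^ k * J m Ω (k + 1) t
      = ∫ ξ : EuclideanSpace ℝ (Fin m),
          (-1 : ℝ) ^ k * ((-(‖ξ‖ ^ 2)) ^ (k + 1) * rexp (-(t * ‖ξ‖ ^ 2)) * gg m Ω ξ) := by
    rw [MeasureTheory.integral_const_mul]
    rfl
  rw [this]
  apply integral_nonpos
  intro ξ
  have h1 : (-1 : ℝ) ^ k * (-(‖ξ‖ ^ 2)) ^ (k + 1) = -((‖ξ‖ ^ 2) ^ (k + 1)) := by
    rw [show (-(‖ξ‖ ^ 2)) = (-1 : ℝ) * ‖ξ‖ ^ 2 by ring, mul_pow, ← mul_assoc, ← pow_add,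
      Odd.neg_one_pow (⟨k, by ring⟩ : Odd (k + (k + 1)))]
    ring
  have h2 : (0:ℝ) ≤ (‖ξ‖ ^ 2) ^ (k + 1) * rexp (-(t * ‖ξ‖ ^ 2)) * gg m Ω ξ := by
    have := gg_nonneg (m := m) Ω ξ
    positivity
  calc (-1 : ℝ) ^ k * ((-(‖ξ‖ ^ 2)) ^ (k + 1) * rexp (-(t * ‖ξ‖ ^ 2)) * gg m Ω ξ)
      = (-1 : ℝ) ^ k * (-(‖ξ‖ ^ 2)) ^ (k + 1) * rexp (-(t * ‖ξ‖ ^ 2)) * gg m Ω ξ := by ring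
    _ = -((‖ξ‖ ^ 2) ^ (k + 1) * rexp (-(t * ‖ξ‖ ^ 2)) * gg m Ω ξ) := by rw [h1]; ring
    _ ≤ 0 := neg_nonpos_of_nonneg h2
end
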